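/- arXiv:0803.0956 — 4 statements merged into one kernel-verified Lean document; each statement's English description precedes it below -/
import Mathlib

section
/- A vertex v of a finite simple graph G is simplicial (its neighborhood is a clique) if and only if v does not belong to any minimal separator of G. -/
open SimpleGraph

variable {V : Type*}

/-- `S` separates `u` and `w` in `G`: every walk from `u` to `w` meets `S`. -/
def Separates (G : SimpleGraph V) (S : Set V) (u w : V) : Prop :=
  ∀ p : G.Walk u w, ∃ x ∈ p.support, x ∈ S

/-- `S` is a minimal `{u,w}`-separator. -/
def IsMinUWSeparator (G : SimpleGraph V) (S : Set V) (u w : V) : Prop :=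
  u ≠ w ∧ ¬ G.Adj u w ∧ u ∉ S ∧ w ∉ S ∧ Separates G S u w ∧
    ∀ S' ⊂ S, ¬ Separates G S' u w

/-- `S` is a minimal separator of `G`. -/
def IsMinSeparator (G : SimpleGraph V) (S : Set V) : Prop :=
  ∃ u w : V, IsMinUWSeparator G S u w

/-- A vertex is simplicial if its neighborhood is a clique. -/
def IsSimplicial (G : SimpleGraph V) (v : V) : Prop :=
  G.IsClique (G.neighborSet v)

/-- A maximal clique (as a vertex set). -/
def IsMaxClique (G : SimpleGraph V) (s : Set V) : Prop :=
  G.IsClique s ∧ ∀ t : Set V, G.IsClique t → s ⊆ t → s = t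

/-- A graph is chordal if it has no induced cycle of length at least 4. -/
def Chordal (G : SimpleGraph V) : Prop :=
  ∀ n : ℕ, 4 ≤ n → IsEmpty (SimpleGraph.cycleGraph n ↪g G)

/-- The type of maximal cliques of `G`. -/
abbrev MaxCliques (G : SimpleGraph V) := {s : Set V // IsMaxClique G s}

/-- `T` is a clique tree of `G`: a tree on the maximal cliques such that for each vertex
the cliques containing it induce a connected subgraph. -/
def IsCliqueTree (G : SimpleGraph V) (T : SimpleGraph (MaxCliques G)) : Prop :=
  T.IsTree ∧ ∀ v : V, (T.induce {Q : MaxCliques G | v ∈ Q.1}).Connected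

/-- The set `X` induces a path in `T` (assuming `T` is a tree: connected with max degree 2). -/
def InducesPath {α : Type*} (T : SimpleGraph α) (X : Set α) : Prop :=
  (T.induce X).Connected ∧ ∀ x : X, ((T.induce X).neighborSet x).ncard ≤ 2

/-- `T` is a clique path tree of `G`. -/
def IsCliquePathTree (G : SimpleGraph V) (T : SimpleGraph (MaxCliques G)) : Prop :=
  T.IsTree ∧ ∀ v : V, InducesPath T {Q : MaxCliques G | v ∈ Q.1}

/-- `G` is a path graph: the empty graph, or a graph admitting a clique path tree. -/
def IsPathGraph (G : SimpleGraph V) : Prop :=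
  IsEmpty V ∨ ∃ T : SimpleGraph (MaxCliques G), IsCliquePathTree G T

/-- `G` is an interval graph: intersection graph of closed real intervals. -/
def IsIntervalGraph (G : SimpleGraph V) : Prop :=
  ∃ f : V → Set ℝ, (∀ v, ∃ a b : ℝ, a ≤ b ∧ f v = Set.Icc a b) ∧
    ∀ u v : V, u ≠ v → (G.Adj u v ↔ (f u ∩ f v).Nonempty)

/-- `a` is a middle of `b, c`: every walk from `b` to `c` meets `N(a)`. -/
def IsMiddle (G : SimpleGraph V) (a b c : V) : Prop :=
  ∀ p : G.Walk b c, ∃ x ∈ p.support, G.Adj a x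

/-- `a, b, c` form an asteroidal triple. -/
def AsteroidalTriple (G : SimpleGraph V) (a b c : V) : Prop :=
  a ≠ b ∧ a ≠ c ∧ b ≠ c ∧ ¬ G.Adj a b ∧ ¬ G.Adj a c ∧ ¬ G.Adj b c ∧
  (∃ p : G.Walk b c, ∀ x ∈ p.support, ¬ G.Adj a x) ∧
  (∃ p : G.Walk a c, ∀ x ∈ p.support, ¬ G.Adj b x) ∧
  (∃ p : G.Walk a b, ∀ x ∈ p.support, ¬ G.Adj c x)

/-- The closed neighborhood clique `Q_v` of a simplicial vertex. -/
def Qv (G : SimpleGraph V) (v : V) : Set V := insert v (G.neighborSet v)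

/-- `S_v`: the vertices of `Q_v` having a neighbor outside `Q_v`. -/
def Sv (G : SimpleGraph V) (v : V) : Set V :=
  {x | x ∈ Qv G v ∧ ∃ y, y ∉ Qv G v ∧ G.Adj x y}

/-- A simplicial vertex is special if `S_v` is an inclusion-maximal minimal separator. -/
def IsSpecial (G : SimpleGraph V) (v : V) : Prop :=
  IsSimplicial G v ∧ IsMinSeparator G (Sv G v) ∧
    ∀ S : Set V, IsMinSeparator G S → Sv G v ⊆ S → S = Sv G v

/-- Connected components of `G ∖ S` containing a vertex complete to `S`. -/
def CompleteComponents (G : SimpleGraph V) (S : Set V) :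
    Set ((G.induce (Sᶜ : Set V)).ConnectedComponent) :=
  {C | ∃ x : (Sᶜ : Set V), (G.induce (Sᶜ : Set V)).connectedComponentMk x = C ∧
        S ⊆ G.neighborSet x.1}

/-- The wheel graph: an `n`-cycle plus a universal vertex (`none`). -/
def wheelGraph (n : ℕ) : SimpleGraph (Option (Fin n)) :=
  SimpleGraph.fromRel (fun a b =>
    (∃ i j : Fin n, a = some i ∧ b = some j ∧ (SimpleGraph.cycleGraph n).Adj i j) ∨
    (a = none ∧ b ≠ none))

/-- `y` lies on the tree-path between `x` and `z` in `T`. -/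
def OnTreePath {α : Type*} (T : SimpleGraph α) (x y z : α) : Prop :=
  ∃ p : T.Walk x z, p.IsPath ∧ y ∈ p.support

lemma separates_mono {G : SimpleGraph V} {S S' : Set V} {u w : V}
    (h : Separates G S u w) (hss : S ⊆ S') : Separates G S' u w := by
  intro p
  obtain ⟨x, hx, hxS⟩ := h p
  exact ⟨x, hx, hss hxS⟩

lemma exists_minimal_separating [Fintype V] (G : SimpleGraph V) (u w : V) (S : Set V)
    (hsep : Separates G S u w) :
    ∃ S' ⊆ S, Separates G S' u w ∧ ∀ S'' ⊂ S', ¬ Separates G S'' u w := by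
  have key : ∀ n (S : Set V), S.ncard = n → Separates G S u w →
      ∃ S' ⊆ S, Separates G S' u w ∧ ∀ S'' ⊂ S', ¬ Separates G S'' u w := by
    intro n
    induction n using Nat.strong_induction_on with
    | _ n ih =>
      intro S hn hsep
      by_cases h : ∃ S'' ⊂ S, Separates G S'' u w
      · obtain ⟨S'', hsub, hsep''⟩ := h
        obtain ⟨S', h1, h2, h3⟩ :=
          ih S''.ncard (hn ▸ Set.ncard_lt_ncard hsub S.toFinite) S'' rfl hsep''
        exact ⟨S', h1.trans hsub.subset, h2, h3⟩
      · push_neg at h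
        exact ⟨S, subset_refl _, hsep, h⟩
  exact key S.ncard S rfl hsep

theorem stmt0 [Fintype V] (G : SimpleGraph V) (v : V) :
    IsSimplicial G v ↔ ¬ ∃ S : Set V, IsMinSeparator G S ∧ v ∈ S := by
  classical
  constructor
  · rintro hsimp ⟨S, ⟨u, w, huw, hnadj, huS, hwS, hsep, hmin⟩, hvS⟩
    have hvu : v ≠ u := fun h => huS (h ▸ hvS)
    have hvw : v ≠ w := fun h => hwS (h ▸ hvS)
    -- S \ {v} does not separate
    have hssub : S \ {v} ⊂ S := Set.sdiff_singleton_ssubset.mpr hvS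
    have hns := hmin (S \ {v}) hssub
    unfold Separates at hns
    push_neg at hns
    obtain ⟨p, hp⟩ := hns
    set q : G.Walk u w := p.toPath.1 with hqdef
    have hq : q.IsPath := p.toPath.2
    have hqsub : ∀ x ∈ q.support, x ∈ p.support := fun x hx =>
      SimpleGraph.Walk.support_toPath_subset p hx
    -- q avoids S \ {v}, but meets S, so v ∈ q.support
    have hvq : v ∈ q.support := by
      obtain ⟨x, hxq, hxS⟩ := hsep q
      have := hp x (hqsub x hxq)
      have hxv : x = v := by
        by_contra hne
        exact this ⟨hxS, hne⟩
      exact hxv ▸ hxq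
    set q1 := q.takeUntil v hvq with hq1def
    set q2 := q.dropUntil v hvq with hq2def
    have hq1 : q1.IsPath := hq.takeUntil hvq
    have hq2 : q2.IsPath := hq.dropUntil hvq
    have hq1sub : ∀ x ∈ q1.support, x ∈ q.support := fun x hx =>
      SimpleGraph.Walk.support_takeUntil_subset q hvq hx
    have hq2sub : ∀ x ∈ q2.support, x ∈ q.support := fun x hx =>
      SimpleGraph.Walk.support_dropUntil_subset q hvq hx
    set r : G.Walk v u := q1.reverse with hrdef
    have hr : r.IsPath := hq1.reverse
    have hrsub : ∀ x ∈ r.support, x ∈ q.support := fun x hx => by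
      apply hq1sub
      rw [hrdef, SimpleGraph.Walk.support_reverse] at hx
      exact List.mem_reverse.mp hx
    have hrnil : ¬ r.Nil := SimpleGraph.Walk.not_nil_of_ne hvu
    obtain ⟨a, hva, r1, hreq⟩ := SimpleGraph.Walk.not_nil_iff.mp hrnil
    have hq2nil : ¬ q2.Nil := SimpleGraph.Walk.not_nil_of_ne hvw
    obtain ⟨b, hvb, q2', hq2eq⟩ := SimpleGraph.Walk.not_nil_iff.mp hq2nil
    have hvr1 : v ∉ r1.support := by
      have := hreq ▸ hr
      rw [SimpleGraph.Walk.cons_isPath_iff] at this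
      exact this.2
    have hvq2' : v ∉ q2'.support := by
      have := hq2eq ▸ hq2
      rw [SimpleGraph.Walk.cons_isPath_iff] at this
      exact this.2
    have hr1sub : ∀ x ∈ r1.support, x ∈ q.support := fun x hx =>
      hrsub x (by rw [hreq, SimpleGraph.Walk.support_cons]; exact List.mem_cons_of_mem _ hx)
    have hq2'sub : ∀ x ∈ q2'.support, x ∈ q.support := fun x hx =>
      hq2sub x (by rw [hq2eq, SimpleGraph.Walk.support_cons]; exact List.mem_cons_of_mem _ hx)
    -- build a walk from a to w avoiding v and within q's support
    have hExists : ∃ W : G.Walk a w, ∀ x ∈ W.support, x ∈ q.support ∧ x ≠ v := by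
      by_cases hab : a = b
      · subst hab
        refine ⟨q2', fun x hx => ⟨hq2'sub x hx, fun he => hvq2' (he ▸ hx)⟩⟩
      · have hadjab : G.Adj a b := hsimp hva hvb hab
        refine ⟨SimpleGraph.Walk.cons hadjab q2', fun x hx => ?_⟩
        rw [SimpleGraph.Walk.support_cons] at hx
        rcases List.mem_cons.mp hx with h | h
        · subst h
          exact ⟨hr1sub x r1.start_mem_support, fun he => G.irrefl (he ▸ hva)⟩
        · exact ⟨hq2'sub x h, fun he => hvq2' (he ▸ h)⟩
    obtain ⟨W, hW⟩ := hExists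
    -- full walk from u to w avoiding S
    have hfull := hsep (r1.reverse.append W)
    obtain ⟨x, hx, hxS⟩ := hfull
    rw [SimpleGraph.Walk.mem_support_append_iff] at hx
    have hxprop : x ∈ q.support ∧ x ≠ v := by
      rcases hx with h | h
      · rw [SimpleGraph.Walk.support_reverse, List.mem_reverse] at h
        exact ⟨hr1sub x h, fun he => hvr1 (he ▸ h)⟩
      · exact hW x h
    exact hp x (hqsub x hxprop.1) ⟨hxS, hxprop.2⟩
  · intro hnsep
    by_contra hnsimp
    unfold IsSimplicial SimpleGraph.IsClique Set.Pairwise at hnsimp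
    push_neg at hnsimp
    obtain ⟨u, hu, w, hw, huw, hnadj⟩ := hnsimp
    rw [SimpleGraph.mem_neighborSet] at hu hw
    have hvu : v ≠ u := fun h => G.irrefl (h ▸ hu)
    have hvw : v ≠ w := fun h => G.irrefl (h ▸ hw)
    -- S₀ = {u,w}ᶜ separates u and w
    have hsep0 : Separates G ({u, w} : Set V)ᶜ u w := by
      intro p
      have hnnil : ¬ p.Nil := SimpleGraph.Walk.not_nil_of_ne huw
      obtain ⟨b, hub, p', hpeq⟩ := SimpleGraph.Walk.not_nil_iff.mp hnnil
      refine ⟨b, ?_, ?_⟩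
      · rw [hpeq, SimpleGraph.Walk.support_cons]
        exact List.mem_cons_of_mem _ p'.start_mem_support
      · intro hb
        rcases hb with h | h
        · exact G.irrefl (h ▸ hub)
        · exact hnadj (h ▸ hub)
    obtain ⟨S', hS'sub, hS'sep, hS'min⟩ :=
      exists_minimal_separating G u w _ hsep0
    have huS' : u ∉ S' := fun h => (hS'sub h) (Or.inl rfl)
    have hwS' : w ∉ S' := fun h => (hS'sub h) (Or.inr rfl)
    have hvS' : v ∈ S' := by
      by_contra hv
      obtain ⟨x, hxsup, hxS⟩ :=
        hS'sep (SimpleGraph.Walk.cons hu.symm (SimpleGraph.Walk.cons hw (SimpleGraph.Walk.nil)))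
      simp only [SimpleGraph.Walk.support_cons, SimpleGraph.Walk.support_nil,
        List.mem_cons, List.mem_singleton] at hxsup
      rcases hxsup with h | h | h | h
      · exact huS' (h ▸ hxS)
      · exact hv (h ▸ hxS)
      · exact hwS' (h ▸ hxS)
      · exact absurd h List.not_mem_nil
    exact hnsep ⟨S', ⟨u, w, huw, hnadj, huS', hwS', hS'sep, hS'min⟩, hvS'⟩
end

section
/- In a chordal graph, every minimal separator is a clique. -/
open SimpleGraph

variable {V : Type*}

namespace ChordalAux

variable {V : Type*} {G : SimpleGraph V}

/-- Take the first `i` darts of a walk. -/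
def wtake {u v : V} : (p : G.Walk u v) → (i : ℕ) → G.Walk u (p.getVert i)
  | p, 0 => (Walk.nil).copy rfl (p.getVert_zero).symm
  | Walk.nil, _ + 1 => (Walk.nil).copy rfl (Walk.getVert_of_length_le _ (by simp)).symm
  | Walk.cons h q, i + 1 => Walk.cons h (wtake q i)

lemma length_wtake {u v : V} (p : G.Walk u v) (i : ℕ) (hi : i ≤ p.length) :
    (wtake p i).length = i := by
  induction p generalizing i with
  | nil =>
    simp only [Walk.length_nil, Nat.le_zero] at hi
    subst hi; simp [wtake]
  | cons h q ih =>
    cases i with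
    | zero => simp [wtake]
    | succ i => simp [wtake, ih i (by simpa using hi)]

lemma support_wtake {u v : V} (p : G.Walk u v) (i : ℕ) :
    (wtake p i).support ⊆ p.support := by
  induction p generalizing i with
  | nil => cases i <;> simp [wtake]
  | cons h q ih =>
    cases i with
    | zero => simp [wtake]
    | succ i =>
      intro z hz
      simp only [wtake, Walk.support_cons, List.mem_cons] at hz ⊢
      have hz2 := (List.mem_cons.1 hz).imp id (fun h' => ih i h')
      simpa using hz2

lemma length_drop {u v : V} (p : G.Walk u v) (i : ℕ) :
    (p.drop i).length = p.length - i := by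
  induction p generalizing i with
  | nil => simp [Walk.drop]
  | cons h q ih =>
    cases i with
    | zero => simp [Walk.drop]
    | succ i => simp [Walk.drop, ih i]

lemma support_drop {u v : V} (p : G.Walk u v) (i : ℕ) :
    (p.drop i).support ⊆ p.support := by
  induction p generalizing i with
  | nil => simp only [Walk.drop]; exact fun z hz => hz
  | cons h q ih =>
    cases i with
    | zero => simp [Walk.drop]
    | succ i =>
      intro z hz
      simp only [Walk.drop, Walk.support_copy, Walk.support_cons, List.mem_cons] at hz ⊢
      exact Or.inr (ih i hz)


/-- Vertices reachable from `u` by walks avoiding `S`. -/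
def Reach (G : SimpleGraph V) (S : Set V) (u : V) : Set V :=
  {x | ∃ p : G.Walk u x, ∀ z ∈ p.support, z ∉ S}

lemma self_mem_reach {S : Set V} {u : V} (hu : u ∉ S) : u ∈ Reach G S u :=
  ⟨Walk.nil, by simpa using hu⟩

lemma reach_not_mem {S : Set V} {u x : V} (hx : x ∈ Reach G S u) : x ∉ S := by
  obtain ⟨p, hp⟩ := hx
  exact hp x p.end_mem_support

lemma mem_reach_of_support {S : Set V} {u x z : V} (p : G.Walk u x)
    (hp : ∀ y ∈ p.support, y ∉ S) (hz : z ∈ p.support) : z ∈ Reach G S u := by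
  classical
  exact ⟨p.takeUntil z hz, fun y hy => hp y (p.support_takeUntil_subset hz hy)⟩

section Sep

-- `Separates` from the ambient file
variable {S : Set V} {u w : V}

lemma sep_symm (h : ∀ p : G.Walk u w, ∃ x ∈ p.support, x ∈ S) :
    ∀ p : G.Walk w u, ∃ x ∈ p.support, x ∈ S := by
  intro p
  obtain ⟨x, hx, hxS⟩ := h p.reverse
  exact ⟨x, by simpa [Walk.support_reverse] using hx, hxS⟩

lemma reach_disjoint (hsep : ∀ p : G.Walk u w, ∃ x ∈ p.support, x ∈ S)
    {x : V} (hx : x ∈ Reach G S u) : x ∉ Reach G S w := by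
  rintro ⟨q, hq⟩
  obtain ⟨p, hp⟩ := hx
  obtain ⟨z, hz, hzS⟩ := hsep (p.append q.reverse)
  rcases (Walk.mem_support_append_iff _ _).1 hz with h | h
  · exact hp z h hzS
  · exact hq z (by simpa [Walk.support_reverse] using h) hzS

lemma reach_no_adj (hsep : ∀ p : G.Walk u w, ∃ x ∈ p.support, x ∈ S)
    {x y : V} (hx : x ∈ Reach G S u) (hy : y ∈ Reach G S w) : ¬ G.Adj x y := by
  intro hadj
  obtain ⟨p, hp⟩ := hx
  obtain ⟨q, hq⟩ := hy
  obtain ⟨z, hz, hzS⟩ := hsep (p.append (Walk.cons hadj q.reverse))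
  rcases (Walk.mem_support_append_iff _ _).1 hz with h | h
  · exact hp z h hzS
  · simp only [Walk.support_cons, List.mem_cons, Walk.support_reverse,
      List.mem_reverse] at h
    rcases h with rfl | h
    · exact hp z p.end_mem_support hzS
    · exact hq z h hzS

/-- Every vertex of a minimal separator has a neighbour in the `S`-avoiding
reachability set of `u`. -/
lemma exists_reach_nbr (hsep : ∀ p : G.Walk u w, ∃ x ∈ p.support, x ∈ S)
    (hmin : ∀ S' ⊂ S, ¬ ∀ p : G.Walk u w, ∃ x ∈ p.support, x ∈ S')
    (hu : u ∉ S) {s : V} (hs : s ∈ S) :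
    ∃ x ∈ Reach G S u, G.Adj s x := by
  classical
  have hss : S \ {s} ⊂ S := Set.sdiff_singleton_ssubset.2 hs
  have h1 := hmin _ hss
  push_neg at h1
  obtain ⟨p, hp⟩ := h1
  have hpS : ∀ z ∈ p.support, z ∈ S → z = s := by
    intro z hz hzS
    by_contra hne
    exact hp z hz ⟨hzS, hne⟩
  obtain ⟨z, hz, hzS⟩ := hsep p
  have hzs := hpS z hz hzS
  subst hzs
  -- z = s is on p; take the prefix up to s
  have hsu : z ≠ u := fun h => hu (h ▸ hzS)
  set q : G.Walk u z := p.takeUntil z hz with hq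
  have hcount : q.support.count z = 1 := p.count_support_takeUntil_eq_one hz
  have hqsub : q.support ⊆ p.support := p.support_takeUntil_subset hz
  obtain ⟨y, hadj, r, hr⟩ := Walk.exists_eq_cons_of_ne hsu q.reverse
  have hrsupp : q.reverse.support = z :: r.support := by rw [hr, Walk.support_cons]
  have hznr : z ∉ r.support := by
    have : q.reverse.support.count z = 1 := by
      rw [Walk.support_reverse, List.count_reverse]; exact hcount
    rw [hrsupp, List.count_cons_self] at this
    simpa using List.count_eq_zero.1 (by omega)
  have hrS : ∀ t ∈ r.support, t ∉ S := by
    intro t ht htS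
    have htq : t ∈ q.support := by
      have : t ∈ q.reverse.support := by rw [hrsupp]; exact List.mem_cons_of_mem _ ht
      simpa [Walk.support_reverse] using this
    have := hpS t (hqsub htq) htS
    exact hznr (this ▸ ht)
  refine ⟨y, ⟨r.reverse, ?_⟩, hadj⟩
  intro t ht
  exact hrS t (by simpa [Walk.support_reverse] using ht)

end Sep

section MinWalk

variable {a b : V} {Q : V → Prop}

lemma exists_min_walk (h : ∃ p : G.Walk a b, ∀ z ∈ p.support, Q z) :
    ∃ p : G.Walk a b, (∀ z ∈ p.support, Q z) ∧
      ∀ q : G.Walk a b, (∀ z ∈ q.support, Q z) → p.length ≤ q.length := by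
  classical
  have hne : ∃ n, ∃ p : G.Walk a b, p.length = n ∧ ∀ z ∈ p.support, Q z := by
    obtain ⟨p, hp⟩ := h
    exact ⟨p.length, p, rfl, hp⟩
  obtain ⟨p, hlen, hp⟩ := Nat.find_spec hne
  refine ⟨p, hp, fun q hq => ?_⟩
  rw [hlen]
  exact Nat.find_le ⟨q, rfl, hq⟩

variable {p : G.Walk a b}

lemma minwalk_inj (hQ : ∀ z ∈ p.support, Q z)
    (hmin : ∀ q : G.Walk a b, (∀ z ∈ q.support, Q z) → p.length ≤ q.length)
    {i j : ℕ} (hij : i < j) (hj : j ≤ p.length) : p.getVert i ≠ p.getVert j := by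
  intro heq
  set q : G.Walk a b := (wtake p i).append ((p.drop j).copy heq.symm rfl) with hqdef
  have hqQ : ∀ z ∈ q.support, Q z := by
    intro z hz
    rcases (Walk.mem_support_append_iff _ _).1 hz with h | h
    · exact hQ z (support_wtake p i h)
    · exact hQ z (support_drop p j (by simpa using h))
  have := hmin q hqQ
  rw [hqdef] at this
  rw [Walk.length_append, length_wtake p i (le_trans (le_of_lt hij) hj),
    Walk.length_copy, length_drop] at this
  omega

lemma minwalk_no_chord (hQ : ∀ z ∈ p.support, Q z)
    (hmin : ∀ q : G.Walk a b, (∀ z ∈ q.support, Q z) → p.length ≤ q.length)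
    {i j : ℕ} (hij : i + 2 ≤ j) (hj : j ≤ p.length) :
    ¬ G.Adj (p.getVert i) (p.getVert j) := by
  intro hadj
  set q : G.Walk a b := (wtake p i).append (Walk.cons hadj (p.drop j)) with hqdef
  have hqQ : ∀ z ∈ q.support, Q z := by
    intro z hz
    rcases (Walk.mem_support_append_iff _ _).1 hz with h | h
    · exact hQ z (support_wtake p i h)
    · simp only [Walk.support_cons, List.mem_cons] at h
      rcases h with h' | h
      · exact hQ z ((Walk.mem_support_iff_exists_getVert (p := p)).2 ⟨i, h'.symm, by omega⟩)
      · exact hQ z (support_drop p j h)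
  have := hmin q hqQ
  rw [hqdef] at this
  rw [Walk.length_append, length_wtake p i (by omega), Walk.length_cons,
    length_drop] at this
  omega

end MinWalk

lemma nat_mod_aux {n a b : ℕ} (hn : 1 < n) (hb : b < n) (ha : a < n) :
    (n - b + a) % n = 1 ↔ (a = b + 1 ∨ (b = n - 1 ∧ a = 0)) := by
  rcases Nat.lt_or_ge (n - b + a) n with h | h
  · rw [Nat.mod_eq_of_lt h]; omega
  · have h2 : n - b + a - n < n := by omega
    rw [Nat.mod_eq_sub_mod h, Nat.mod_eq_of_lt h2]; omega

/-- Arithmetic of subtraction in `Fin n`. -/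
lemma fin_sub_val_eq_one {n : ℕ} (hn : 1 < n) (i j : Fin n) :
    (j - i).val = 1 ↔ (j.val = i.val + 1 ∨ (i.val = n - 1 ∧ j.val = 0)) := by
  have hv : (j - i).val = (n - i.val + j.val) % n := by rw [Fin.sub_def]
  rw [hv, nat_mod_aux hn i.isLt j.isLt]

end ChordalAux

theorem stmt1 [Fintype V] (G : SimpleGraph V) (hG : Chordal G)
    (S : Set V) (hS : IsMinSeparator G S) : G.IsClique S := by
  classical
  obtain ⟨u, w, huw, hadjuw, huS, hwS, hsep, hmin⟩ := hS
  intro a ha b hb hab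
  by_contra hnadj
  have hsep' : ∀ p : G.Walk u w, ∃ x ∈ p.support, x ∈ S := hsep
  have hsepw : ∀ p : G.Walk w u, ∃ x ∈ p.support, x ∈ S := ChordalAux.sep_symm hsep'
  have hminw : ∀ S' ⊂ S, ¬ ∀ p : G.Walk w u, ∃ x ∈ p.support, x ∈ S' := by
    intro S' hS' hc
    exact hmin S' hS' (fun p => (ChordalAux.sep_symm hc) p)
  set Cu := ChordalAux.Reach G S u with hCudef
  set Cw := ChordalAux.Reach G S w with hCwdef
  obtain ⟨xa, hxa, haxa⟩ := ChordalAux.exists_reach_nbr hsep' hmin huS ha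
  obtain ⟨xb, hxb, hbxb⟩ := ChordalAux.exists_reach_nbr hsep' hmin huS hb
  obtain ⟨ya, hya, haya⟩ := ChordalAux.exists_reach_nbr hsepw hminw hwS ha
  obtain ⟨yb, hyb, hbyb⟩ := ChordalAux.exists_reach_nbr hsepw hminw hwS hb
  -- existence of a walk from a to b through Cu
  have hexist : ∀ (z₀ : V) (C : Set V), C = ChordalAux.Reach G S z₀ →
      ∀ x1 x2 : V, x1 ∈ C → x2 ∈ C → G.Adj a x1 → G.Adj b x2 →
      ∃ p : G.Walk a b, ∀ z ∈ p.support, z = a ∨ z = b ∨ z ∈ C := by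
    rintro z₀ C rfl x1 x2 hx1 hx2 ha1 hb2
    obtain ⟨p1, hp1⟩ := hx1
    obtain ⟨p2, hp2⟩ := hx2
    have hq : ∀ z ∈ (p1.reverse.append p2).support, z ∈ ChordalAux.Reach G S z₀ := by
      intro z hz
      rcases (Walk.mem_support_append_iff _ _).1 hz with h | h
      · exact ChordalAux.mem_reach_of_support p1 hp1
          (by simpa [Walk.support_reverse] using h)
      · exact ChordalAux.mem_reach_of_support p2 hp2 h
    refine ⟨Walk.cons ha1 ((p1.reverse.append p2).concat hb2.symm), ?_⟩
    intro z hz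
    simp only [Walk.support_cons, Walk.support_concat, List.mem_cons,
      List.concat_eq_append, List.mem_append, List.mem_singleton] at hz
    rcases hz with rfl | h | rfl | h
    · exact Or.inl rfl
    · exact Or.inr (Or.inr (hq z h))
    · exact Or.inr (Or.inl rfl)
    · simp at h
  obtain ⟨W1, hW1⟩ := hexist u Cu hCudef xa xb hxa hxb haxa hbxb
  obtain ⟨W2, hW2⟩ := hexist w Cw hCwdef ya yb hya hyb haya hbyb
  obtain ⟨p1, hp1Q, hp1min⟩ := ChordalAux.exists_min_walk ⟨W1, hW1⟩
  obtain ⟨p2, hp2Q, hp2min⟩ := ChordalAux.exists_min_walk ⟨W2, hW2⟩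
  -- abbreviations
  have hinj1 : ∀ i j : ℕ, i < j → j ≤ p1.length → p1.getVert i ≠ p1.getVert j :=
    fun i j h1 h2 => ChordalAux.minwalk_inj hp1Q hp1min h1 h2
  have hinj2 : ∀ i j : ℕ, i < j → j ≤ p2.length → p2.getVert i ≠ p2.getVert j :=
    fun i j h1 h2 => ChordalAux.minwalk_inj hp2Q hp2min h1 h2
  have hch1 : ∀ i j : ℕ, i + 2 ≤ j → j ≤ p1.length →
      ¬ G.Adj (p1.getVert i) (p1.getVert j) :=
    fun i j h1 h2 => ChordalAux.minwalk_no_chord hp1Q hp1min h1 h2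
  have hch2 : ∀ i j : ℕ, i + 2 ≤ j → j ≤ p2.length →
      ¬ G.Adj (p2.getVert i) (p2.getVert j) :=
    fun i j h1 h2 => ChordalAux.minwalk_no_chord hp2Q hp2min h1 h2
  have hn1 : 2 ≤ p1.length := by
    by_contra h
    have hb' : p1.getVert p1.length = b := p1.getVert_length
    have hcase : p1.length = 0 ∨ p1.length = 1 := by omega
    rcases hcase with h0 | h0
    · rw [h0, p1.getVert_zero] at hb'
      exact hab hb'
    · refine hnadj ?_
      have h2 := p1.adj_getVert_succ (i := 0) (by omega)
      rw [p1.getVert_zero, show (0 + 1 : ℕ) = p1.length by omega, hb'] at h2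
      exact h2
  have hn2 : 2 ≤ p2.length := by
    by_contra h
    have hb' : p2.getVert p2.length = b := p2.getVert_length
    have hcase : p2.length = 0 ∨ p2.length = 1 := by omega
    rcases hcase with h0 | h0
    · rw [h0, p2.getVert_zero] at hb'
      exact hab hb'
    · refine hnadj ?_
      have h2 := p2.adj_getVert_succ (i := 0) (by omega)
      rw [p2.getVert_zero, show (0 + 1 : ℕ) = p2.length by omega, hb'] at h2
      exact h2
  -- interiors
  have hint1 : ∀ i : ℕ, 0 < i → i < p1.length → p1.getVert i ∈ Cu := by
    intro i h0 h1
    have hmem : p1.getVert i ∈ p1.support :=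
      (Walk.mem_support_iff_exists_getVert (p := p1)).2 ⟨i, rfl, by omega⟩
    rcases hp1Q _ hmem with h | h | h
    · exact absurd (p1.getVert_zero.trans h.symm) (hinj1 0 i h0 (by omega))
    · exact absurd (h.trans p1.getVert_length.symm) (hinj1 i p1.length h1 le_rfl)
    · exact h
  have hint2 : ∀ i : ℕ, 0 < i → i < p2.length → p2.getVert i ∈ Cw := by
    intro i h0 h1
    have hmem : p2.getVert i ∈ p2.support :=
      (Walk.mem_support_iff_exists_getVert (p := p2)).2 ⟨i, rfl, by omega⟩
    rcases hp2Q _ hmem with h | h | h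
    · exact absurd (p2.getVert_zero.trans h.symm) (hinj2 0 i h0 (by omega))
    · exact absurd (h.trans p2.getVert_length.symm) (hinj2 i p2.length h1 le_rfl)
    · exact h
  -- cross facts
  have hdisj : ∀ x ∈ Cu, x ∉ Cw := fun x hx => ChordalAux.reach_disjoint hsep' hx
  have hnoe : ∀ x ∈ Cu, ∀ y ∈ Cw, ¬ G.Adj x y :=
    fun x hx y hy => ChordalAux.reach_no_adj hsep' hx hy
  have haCw : a ∉ Cw := fun h => ChordalAux.reach_not_mem h ha
  have hbCw : b ∉ Cw := fun h => ChordalAux.reach_not_mem h hb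
  -- the cyclic vertex function
  set n : ℕ := p1.length + p2.length with hndef
  set f : ℕ → V := fun i => if i ≤ p1.length then p1.getVert i else p2.getVert (n - i)
    with hfdef
  have hf1 : ∀ i : ℕ, i ≤ p1.length → f i = p1.getVert i := by
    intro i h; simp only [hfdef, if_pos h]
  have hf2 : ∀ i : ℕ, p1.length ≤ i → i ≤ n → f i = p2.getVert (n - i) := by
    intro i h hn
    rcases eq_or_lt_of_le h with rfl | h'
    · rw [hf1 _ le_rfl, p1.getVert_length, show n - p1.length = p2.length by omega,
        p2.getVert_length]
    · simp only [hfdef, if_neg (by omega : ¬ i ≤ p1.length)]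
  have hfa : f 0 = a := by rw [hf1 0 (by omega), p1.getVert_zero]
  have hfn : f n = a := by
    rw [hf2 n (by omega) le_rfl, Nat.sub_self, p2.getVert_zero]
  -- consecutive adjacency
  have hstep : ∀ i : ℕ, i < n → G.Adj (f i) (f (i + 1)) := by
    intro i hi
    rcases le_or_gt (i + 1) p1.length with h | h
    · rw [hf1 i (by omega), hf1 (i + 1) h]
      exact p1.adj_getVert_succ (by omega)
    · have hi1 : p1.length ≤ i := by omega
      rw [hf2 i hi1 (by omega), hf2 (i + 1) (by omega) (by omega)]
      have h2 := p2.adj_getVert_succ (i := n - (i + 1)) (by omega)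
      rw [show n - (i + 1) + 1 = n - i by omega] at h2
      exact h2.symm
  -- injectivity
  have hinjf : ∀ i j : ℕ, i < j → j < n → f i ≠ f j := by
    intro i j hij hj
    rcases le_or_gt j p1.length with hjn | hjn
    · rw [hf1 i (by omega), hf1 j hjn]
      exact hinj1 i j hij hjn
    · rcases le_or_gt i p1.length with hin | hin
      · -- mixed : i ≤ p1.length < j
        rw [hf1 i hin, hf2 j (by omega) (by omega)]
        have hfj : p2.getVert (n - j) ∈ Cw := hint2 _ (by omega) (by omega)
        intro heq
        rcases Nat.eq_zero_or_pos i with rfl | hi0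
        · rw [p1.getVert_zero] at heq
          exact haCw (heq ▸ hfj)
        · rcases eq_or_lt_of_le hin with rfl | hin'
          · rw [p1.getVert_length] at heq
            exact hbCw (heq ▸ hfj)
          · exact hdisj _ (hint1 i hi0 hin') (heq ▸ hfj)
      · rw [hf2 i (by omega) (by omega), hf2 j (by omega) (by omega)]
        exact fun heq =>
          hinj2 (n - j) (n - i) (by omega) (by omega) heq.symm
  -- no chords
  have hnoadj : ∀ i j : ℕ, i < j → j < n → j ≠ i + 1 → ¬ (i = 0 ∧ j = n - 1) →
      ¬ G.Adj (f i) (f j) := by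
    intro i j hij hj hne hne2 hadj
    rcases le_or_gt j p1.length with hjn | hjn
    · rw [hf1 i (by omega), hf1 j hjn] at hadj
      exact hch1 i j (by omega) hjn hadj
    · rcases le_or_gt p1.length i with hin | hin
      · rw [hf2 i hin (by omega), hf2 j (by omega) (by omega)] at hadj
        exact hch2 (n - j) (n - i) (by omega) (by omega) hadj.symm
      · rw [hf1 i (by omega), hf2 j (by omega) (by omega)] at hadj
        rcases Nat.eq_zero_or_pos i with rfl | hi0
        · rw [p1.getVert_zero] at hadj
          have hj2 : 0 + 2 ≤ n - j := by omega
          have h3 := hch2 0 (n - j) hj2 (by omega)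
          rw [p2.getVert_zero] at h3
          exact h3 hadj
        · exact hnoe _ (hint1 i hi0 hin) _ (hint2 _ (by omega) (by omega)) hadj
  have hn4 : 4 ≤ n := by omega
  have hn1' : 1 < n := by omega
  -- the embedding
  have key : ∀ i j : Fin n, i.val < j.val → G.Adj (f i.val) (f j.val) →
      (SimpleGraph.cycleGraph n).Adj i j := by
    intro i j hij hadj
    rw [SimpleGraph.cycleGraph_adj']
    by_cases h1 : j.val = i.val + 1
    · exact Or.inr ((ChordalAux.fin_sub_val_eq_one hn1' i j).2 (Or.inl h1))
    · by_cases h2 : i.val = 0 ∧ j.val = n - 1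
      · exact Or.inl ((ChordalAux.fin_sub_val_eq_one hn1' j i).2 (Or.inr ⟨h2.2, h2.1⟩))
      · exact absurd hadj (hnoadj i.val j.val hij j.isLt h1 h2)
  have key2 : ∀ i j : Fin n, (j - i).val = 1 → G.Adj (f i.val) (f j.val) := by
    intro i j hji
    rcases (ChordalAux.fin_sub_val_eq_one hn1' i j).1 hji with h | h
    · rw [h]
      exact hstep i.val i.isLt
    · rw [h.1, h.2]
      have h3 := hstep (n - 1) (by omega)
      rw [show n - 1 + 1 = n by omega, hfn, ← hfa] at h3
      exact h3
  have hiff : ∀ i j : Fin n, G.Adj (f i.val) (f j.val) ↔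
      (SimpleGraph.cycleGraph n).Adj i j := by
    intro i j
    constructor
    · intro hadj
      have hij : i.val ≠ j.val := by
        intro h
        have : f i.val = f j.val := by rw [h]
        exact G.loopless.irrefl _ (this ▸ hadj)
      rcases lt_or_gt_of_ne hij with h | h
      · exact key i j h hadj
      · exact (key j i h hadj.symm).symm
    · intro hC
      rw [SimpleGraph.cycleGraph_adj'] at hC
      rcases hC with h | h
      · exact (key2 j i h).symm
      · exact key2 i j h
  have hFinj : Function.Injective (fun i : Fin n => f i.val) := by
    intro i j h
    by_contra hne
    have hij : i.val ≠ j.val := fun h' => hne (Fin.ext h')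
    rcases lt_or_gt_of_ne hij with h' | h'
    · exact hinjf i.val j.val h' j.isLt h
    · exact hinjf j.val i.val h' i.isLt h.symm
  exact (hG n hn4).false
    ⟨⟨fun i : Fin n => f i.val, hFinj⟩, fun {i j} => hiff i j⟩
end

section
/- A finite chordal graph that is not a complete graph has at least two non-adjacent simplicial vertices. -/
open SimpleGraph

variable {V : Type*}

section DiracAux
variable {G : SimpleGraph V}

lemma walk_take (p : G.Walk x y) (i : ℕ) (hi : i ≤ p.length) :
    ∃ q : G.Walk x (p.getVert i), q.length = i ∧ ∀ t ≤ i, q.getVert t = p.getVert t := by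
  induction i generalizing x p with
  | zero =>
    refine ⟨Walk.nil.copy rfl (p.getVert_zero).symm, by simp, ?_⟩
    intro t ht
    interval_cases t
    simp
  | succ i ih =>
    cases p with
    | nil => simp at hi
    | cons h p' =>
      obtain ⟨q', hq'len, hq'⟩ := ih p' (by simpa [Nat.succ_le_succ_iff] using hi)
      refine ⟨(Walk.cons h q').copy rfl (by rw [Walk.getVert_cons_succ]), by simp [hq'len], ?_⟩
      intro t ht
      rw [Walk.getVert_copy]
      cases t with
      | zero => simp
      | succ t => rw [Walk.getVert_cons_succ, Walk.getVert_cons_succ, hq' t (by omega)]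

lemma walk_drop (p : G.Walk x y) (j : ℕ) :
    ∃ r : G.Walk (p.getVert j) y, r.length = p.length - j ∧
      ∀ t, r.getVert t = p.getVert (j + t) := by
  induction j generalizing x p with
  | zero =>
    refine ⟨p.copy (p.getVert_zero).symm rfl, by simp, fun t => by simp⟩
  | succ j ih =>
    cases p with
    | nil =>
      refine ⟨Walk.nil.copy (by simp [Walk.getVert]) rfl, by simp, fun t => by simp [Walk.getVert]⟩
    | cons h p' =>
      obtain ⟨r', hr'len, hr'⟩ := ih p'
      refine ⟨r'.copy (by rw [Walk.getVert_cons_succ]) rfl, by simp [hr'len], ?_⟩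
      intro t
      rw [Walk.getVert_copy, hr' t]
      have : j + 1 + t = (j + t) + 1 := by omega
      rw [this, Walk.getVert_cons_succ]
lemma walk_cut_eq (p : G.Walk x y) {i j : ℕ} (hij : i ≤ j) (hj : j ≤ p.length)
    (h : p.getVert i = p.getVert j) :
    ∃ q : G.Walk x y, q.length = p.length - (j - i) ∧
      ∀ t, (t ≤ i → q.getVert t = p.getVert t) ∧
        (i ≤ t → q.getVert t = p.getVert (t + (j - i))) := by
  obtain ⟨q1, hq1len, hq1⟩ := walk_take p i (le_trans hij hj)
  obtain ⟨r, hrlen, hr⟩ := walk_drop p j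
  refine ⟨q1.append (r.copy h.symm rfl), by simp [hq1len, hrlen]; omega, ?_⟩
  intro t
  constructor
  · intro ht
    rw [Walk.getVert_append]
    rcases lt_or_eq_of_le ht with ht' | ht'
    · rw [if_pos (by omega), hq1 t ht]
    · subst ht'
      rw [if_neg (by omega), Walk.getVert_copy, hq1len]
      simp only [Nat.sub_self]
      rw [hr 0, Nat.add_zero, ← h]
  · intro ht
    rw [Walk.getVert_append]
    rcases lt_or_eq_of_le ht with ht' | ht'
    · rw [if_neg (by omega), Walk.getVert_copy, hq1len, hr]
      congr 1
      omega
    · subst ht'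
      rw [if_neg (by omega), Walk.getVert_copy, hq1len]
      simp only [Nat.sub_self]
      rw [hr 0, Nat.add_zero]
      congr 1
      omega

lemma walk_cut_adj (p : G.Walk x y) {i j : ℕ} (hij : i < j) (hj : j ≤ p.length)
    (h : G.Adj (p.getVert i) (p.getVert j)) :
    ∃ q : G.Walk x y, q.length = p.length - (j - i) + 1 ∧
      ∀ t, (t ≤ i → q.getVert t = p.getVert t) ∧
        (i < t → q.getVert t = p.getVert (t + (j - i) - 1)) := by
  obtain ⟨q1, hq1len, hq1⟩ := walk_take p i (by omega)
  obtain ⟨r, hrlen, hr⟩ := walk_drop p j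
  refine ⟨q1.append (Walk.cons h r), by simp only [Walk.length_append, Walk.length_cons, hq1len, hrlen]; omega, ?_⟩
  intro t
  constructor
  · intro ht
    rw [Walk.getVert_append]
    rcases lt_or_eq_of_le ht with ht' | ht'
    · rw [if_pos (by omega), hq1 t ht]
    · subst ht'
      rw [if_neg (by omega), hq1len]
      simp only [Nat.sub_self]
      rfl
  · intro ht
    rw [Walk.getVert_append, if_neg (by omega), hq1len]
    have h2 : t - i = (t - i - 1) + 1 := by omega
    rw [h2, Walk.getVert_cons_succ, hr]
    congr 1
    omega
/-- A minimal-length walk with interior in `A` is an induced path. -/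
lemma exists_min_walk {x y : V} (A : Set V) (hxy : x ≠ y) (hnadj : ¬ G.Adj x y)
    (hex : ∃ p : G.Walk x y, ∀ t, 0 < t → t < p.length → p.getVert t ∈ A) :
    ∃ p : G.Walk x y, (∀ t, 0 < t → t < p.length → p.getVert t ∈ A) ∧ 2 ≤ p.length ∧
      (∀ i j, i < j → j ≤ p.length → p.getVert i ≠ p.getVert j) ∧
      (∀ i j, i < j → j ≤ p.length → (G.Adj (p.getVert i) (p.getVert j) ↔ j = i + 1)) := by
  classical
  set P : (q : G.Walk x y) → Prop := fun q => ∀ t, 0 < t → t < q.length → q.getVert t ∈ A with hP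
  have hne : {n | ∃ q : G.Walk x y, P q ∧ q.length = n}.Nonempty := by
    obtain ⟨p, hp⟩ := hex
    exact ⟨p.length, p, hp, rfl⟩
  obtain ⟨p, hpP, hplen⟩ := Nat.sInf_mem hne
  have hmin : ∀ q : G.Walk x y, P q → p.length ≤ q.length := by
    intro q hq
    rw [hplen]
    exact Nat.sInf_le ⟨q, hq, rfl⟩
  clear hplen
  have hlen2 : 2 ≤ p.length := by
    rcases Nat.lt_or_ge p.length 2 with h | h
    · interval_cases hl : p.length
      · exact absurd ((Walk.nil_iff_length_eq.mpr hl).eq) hxy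
      · have := p.adj_getVert_succ (i := 0) (by omega)
        rw [p.getVert_zero] at this
        have h1 : p.getVert 1 = y := by
          have := p.getVert_length
          rwa [hl] at this
        rw [h1] at this
        exact absurd this hnadj
    · exact h
  have hnodup : ∀ i j, i < j → j ≤ p.length → p.getVert i ≠ p.getVert j := by
    intro i j hij hj heq
    obtain ⟨q, hqlen, hq⟩ := walk_cut_eq p hij.le hj heq
    have hqP : P q := by
      intro t ht htl
      rcases le_or_gt t i with h' | h'
      · rw [(hq t).1 h']
        exact hpP t ht (by omega)
      · rw [(hq t).2 h'.le]
        exact hpP _ (by omega) (by omega)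
    have := hmin q hqP
    omega
  refine ⟨p, hpP, hlen2, hnodup, ?_⟩
  intro i j hij hj
  constructor
  · intro hadj
    by_contra hne'
    have hij2 : i + 1 < j := by omega
    obtain ⟨q, hqlen, hq⟩ := walk_cut_adj p hij hj hadj
    have hqP : P q := by
      intro t ht htl
      rcases le_or_gt t i with h' | h'
      · rw [(hq t).1 h']
        exact hpP t ht (by omega)
      · rw [(hq t).2 h']
        exact hpP _ (by omega) (by omega)
    have := hmin q hqP
    omega
  · rintro rfl
    exact p.adj_getVert_succ (by omega)
/-- Vertices reachable from `u` by walks avoiding `S`. -/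
def reachSet (G : SimpleGraph V) (S : Set V) (u : V) : Set V :=
  {z | ∃ p : G.Walk u z, ∀ x ∈ p.support, x ∉ S}

lemma self_mem_reachSet {S : Set V} {u : V} (hu : u ∉ S) : u ∈ reachSet G S u :=
  ⟨Walk.nil, by simp [hu]⟩

lemma reachSet_not_mem {S : Set V} {u z : V} (hz : z ∈ reachSet G S u) : z ∉ S := by
  obtain ⟨p, hp⟩ := hz
  exact hp z p.end_mem_support

lemma reachSet_adj {S : Set V} {u z z' : V} (hz : z ∈ reachSet G S u)
    (hadj : G.Adj z z') (hz' : z' ∉ S) : z' ∈ reachSet G S u := by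
  obtain ⟨p, hp⟩ := hz
  refine ⟨p.append (Walk.cons hadj Walk.nil), ?_⟩
  intro m hm
  rw [Walk.mem_support_append_iff] at hm
  rcases hm with hm | hm
  · exact hp m hm
  · simp only [Walk.support_cons, Walk.support_nil, List.mem_cons, List.mem_singleton] at hm
    rcases hm with rfl | hm
    · exact hp m p.end_mem_support
    · rcases hm with rfl | hm
      · exact hz'
      · simp at hm

lemma reachSet_walk {S : Set V} {u z z' : V} (hz : z ∈ reachSet G S u)
    (hz' : z' ∈ reachSet G S u) :
    ∃ r : G.Walk z z', ∀ m ∈ r.support, m ∈ reachSet G S u := by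
  classical
  obtain ⟨p, hp⟩ := hz
  obtain ⟨q, hq⟩ := hz'
  refine ⟨p.reverse.append q, ?_⟩
  intro m hm
  rw [Walk.mem_support_append_iff, Walk.support_reverse, List.mem_reverse] at hm
  rcases hm with hm | hm
  · exact ⟨p.takeUntil m hm, fun x hx => hp x (p.support_takeUntil_subset hm hx)⟩
  · exact ⟨q.takeUntil m hm, fun x hx => hq x (q.support_takeUntil_subset hm hx)⟩

lemma reachSet_cross {S : Set V} {u w a b : V} (hsep : Separates G S u w)
    (ha : a ∈ reachSet G S u) (hb : b ∈ reachSet G S w) : a ≠ b ∧ ¬ G.Adj a b := by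
  have hdisj : ∀ c : V, c ∈ reachSet G S u → c ∈ reachSet G S w → False := by
    rintro c ⟨p, hp⟩ ⟨q, hq⟩
    obtain ⟨x, hx, hxS⟩ := hsep (p.append q.reverse)
    rw [Walk.mem_support_append_iff, Walk.support_reverse, List.mem_reverse] at hx
    rcases hx with hx | hx
    · exact hp x hx hxS
    · exact hq x hx hxS
  constructor
  · rintro rfl
    exact hdisj a ha hb
  · intro hadj
    exact hdisj b (reachSet_adj ha hadj (reachSet_not_mem hb)) hb

lemma sep_neighbor {S : Set V} {u w s : V} (hS : IsMinUWSeparator G S u w) (hs : s ∈ S) :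
    ∃ a ∈ reachSet G S u, G.Adj s a := by
  classical
  obtain ⟨hne, hnadj, huS, hwS, hsep, hmin⟩ := hS
  have hss : S \ {s} ⊂ S := Set.sdiff_singleton_ssubset.mpr hs
  have := hmin _ hss
  rw [Separates] at this
  push_neg at this
  obtain ⟨p, hp⟩ := this
  have hsmem : s ∈ p.support := by
    obtain ⟨x, hx, hxS⟩ := hsep p
    have := hp x hx
    rw [Set.mem_diff, Set.mem_singleton_iff] at this
    push_neg at this
    rcases eq_or_ne x s with rfl | hne'
    · exact hx
    · exact absurd (this hxS) hne'
  set q := p.takeUntil s hsmem with hq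
  have hqcount := p.count_support_takeUntil_eq_one hsmem
  have hqnn : ¬ q.Nil := Walk.not_nil_of_ne (fun h => huS (h ▸ hs))
  have : ¬ q.reverse.Nil := by
    rwa [Walk.nil_iff_length_eq, Walk.length_reverse, ← Walk.nil_iff_length_eq]
  rw [Walk.not_nil_iff] at this
  obtain ⟨a, hadj, r, hr⟩ := this
  have hsr : s ∉ r.support := by
    intro hmem
    have : q.reverse.support = s :: r.support := by rw [hr, Walk.support_cons]
    have hc : q.support.count s = (s :: r.support).count s := by
      rw [← this, Walk.support_reverse, List.count_reverse]
    rw [hqcount, List.count_cons_self] at hc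
    have := List.count_pos_iff.mpr hmem  -- r.support.count s > 0
    omega
  refine ⟨a, ⟨r.reverse, ?_⟩, hadj⟩
  intro m hm
  rw [Walk.support_reverse, List.mem_reverse] at hm
  have hmq : m ∈ q.support := by
    have : m ∈ q.reverse.support := by
      rw [hr, Walk.support_cons]
      exact List.mem_cons_of_mem _ hm
    rwa [Walk.support_reverse, List.mem_reverse] at this
  have hmp : m ∈ p.support := p.support_takeUntil_subset hsmem hmq
  have h1 := hp m hmp
  rw [Set.mem_diff, Set.mem_singleton_iff] at h1
  push_neg at h1
  intro hmS
  exact hsr ((h1 hmS) ▸ hm)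
lemma exists_min_sep [Fintype V] {u w : V} (hne : u ≠ w) (hnadj : ¬ G.Adj u w) :
    ∃ S : Set V, IsMinUWSeparator G S u w := by
  classical
  have hsep0 : Separates G {x | x ≠ u ∧ x ≠ w} u w := by
    intro p
    have hlen : 1 ≤ p.length := by
      by_contra h
      push_neg at h
      have h0 : p.length = 0 := by omega
      exact hne ((Walk.nil_iff_length_eq.mpr h0).eq)
    refine ⟨p.getVert 1, Walk.mem_support_iff_exists_getVert.mpr ⟨1, rfl, hlen⟩, ?_, ?_⟩
    · intro h
      have := p.adj_getVert_succ (i := 0) (by omega)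
      rw [p.getVert_zero, h] at this
      exact G.irrefl this
    · intro h
      have := p.adj_getVert_succ (i := 0) (by omega)
      rw [p.getVert_zero, h] at this
      exact hnadj this
  have key : ∀ k (S : Set V), u ∉ S → w ∉ S → Separates G S u w → S.ncard ≤ k →
      ∃ T : Set V, IsMinUWSeparator G T u w := by
    intro k
    induction k with
    | zero =>
      intro S hu hw hsep hcard
      have hS : S = ∅ := (Set.ncard_eq_zero (Set.toFinite S)).mp (Nat.le_zero.mp hcard)
      refine ⟨S, hne, hnadj, hu, hw, hsep, ?_⟩
      intro S' hS'
      rw [hS] at hS'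
      simp [Set.ssubset_iff_subset_ne, Set.subset_empty_iff] at hS'
    | succ k ih =>
      intro S hu hw hsep hcard
      by_cases h : ∀ S' ⊂ S, ¬ Separates G S' u w
      · exact ⟨S, hne, hnadj, hu, hw, hsep, h⟩
      · push_neg at h
        obtain ⟨S', hS', hsep'⟩ := h
        have hcard' : S'.ncard ≤ k := by
          have := Set.ncard_lt_ncard hS' (Set.toFinite S)
          omega
        exact ih S' (fun h => hu (hS'.1 h)) (fun h => hw (hS'.1 h)) hsep' hcard'
  exact key _ _ (by simp) (by simp [hne]) hsep0 le_rfl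

lemma chordal_induce (hG : Chordal G) (D : Set V) : Chordal (G.induce D) := by
  intro n hn
  exact ⟨fun e => (hG n hn).false ((SimpleGraph.Embedding.induce D).comp e)⟩

lemma simplicial_of_induce {D : Set V} {v : V} (hv : v ∈ D)
    (hnb : ∀ z, G.Adj v z → z ∈ D)
    (hs : IsSimplicial (G.induce D) ⟨v, hv⟩) : IsSimplicial G v := by
  intro z1 hz1 z2 hz2 hne
  have h1 : G.Adj v z1 := hz1
  have h2 : G.Adj v z2 := hz2
  have m1 : z1 ∈ D := hnb z1 h1
  have m2 : z2 ∈ D := hnb z2 h2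
  have := hs (x := ⟨z1, m1⟩) (y := ⟨z2, m2⟩) (by simpa [mem_neighborSet, comap_adj] using h1)
    (by simpa [mem_neighborSet, comap_adj] using h2) (by simpa [Subtype.ext_iff] using hne)
  simpa [comap_adj] using this
lemma fin_sub_val {n : ℕ} (u v : Fin n) :
    (u - v).val = if v.val ≤ u.val then u.val - v.val else u.val + n - v.val := by
  have hu := u.isLt
  have hv := v.isLt
  rw [Fin.sub_def]
  simp only
  split
  · have h1 : n - v.val + u.val = (u.val - v.val) + n := by omega
    rw [h1, Nat.add_mod_right, Nat.mod_eq_of_lt (by omega)]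
  · rw [Nat.mod_eq_of_lt (by omega)]
    omega

lemma cyc_adj_val {n : ℕ} (hn : 4 ≤ n) (i j : Fin n) :
    (cycleGraph n).Adj i j ↔ (j.val = i.val + 1 ∨ i.val = j.val + 1 ∨
      (i.val = 0 ∧ j.val = n - 1) ∨ (j.val = 0 ∧ i.val = n - 1)) := by
  have hi := i.isLt
  have hj := j.isLt
  rw [cycleGraph_adj', fin_sub_val, fin_sub_val]
  split <;> split <;> omega
lemma sep_symm {S : Set V} {u w : V} (h : Separates G S u w) : Separates G S w u := by
  intro p
  obtain ⟨z, hz, hzS⟩ := h p.reverse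
  rw [Walk.support_reverse, List.mem_reverse] at hz
  exact ⟨z, hz, hzS⟩

lemma minUW_symm {S : Set V} {u w : V} (h : IsMinUWSeparator G S u w) :
    IsMinUWSeparator G S w u := by
  obtain ⟨hne, hnadj, huS, hwS, hsep, hmin⟩ := h
  refine ⟨hne.symm, fun hh => hnadj hh.symm, hwS, huS, sep_symm hsep, ?_⟩
  intro S' hS' hsep'
  exact hmin S' hS' (sep_symm hsep')

lemma interior_walk {x y : V} {A : Set V} {a a' : V} (hxa : G.Adj x a) (hya' : G.Adj y a')
    (r : G.Walk a a') (hr : ∀ m ∈ r.support, m ∈ A) :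
    ∃ p : G.Walk x y, ∀ t, 0 < t → t < p.length → p.getVert t ∈ A := by
  refine ⟨Walk.cons hxa (r.append (Walk.cons hya'.symm Walk.nil)), ?_⟩
  intro t ht htl
  simp only [Walk.length_cons, Walk.length_append, Walk.length_nil] at htl
  rw [Walk.getVert_cons _ _ (by omega), Walk.getVert_append]
  split
  · next hs =>
    exact hr _ (Walk.mem_support_iff_exists_getVert.mpr ⟨t - 1, rfl, by omega⟩)
  · next hs =>
    have : t - 1 - r.length = 0 := by omega
    rw [this]
    rw [Walk.getVert_zero]
    exact hr _ r.end_mem_support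

lemma minsep_clique (hG : Chordal G) {S : Set V} {u w : V}
    (hS : IsMinUWSeparator G S u w) : G.IsClique S := by
  classical
  rintro x hx y hy hxy
  by_contra hnadj
  have hSsym := minUW_symm hS
  have hsep := hS.2.2.2.2.1
  obtain ⟨a, haA, hxa⟩ := sep_neighbor hS hx
  obtain ⟨a', ha'A, hya'⟩ := sep_neighbor hS hy
  obtain ⟨b, hbB, hxb⟩ := sep_neighbor hSsym hx
  obtain ⟨b', hb'B, hyb'⟩ := sep_neighbor hSsym hy
  obtain ⟨rA, hrA⟩ := reachSet_walk haA ha'A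
  obtain ⟨rB, hrB⟩ := reachSet_walk hbB hb'B
  obtain ⟨pA, hAint, hN2, nodupA, chordA⟩ :=
    exists_min_walk (reachSet G S u) hxy hnadj (interior_walk hxa hya' rA hrA)
  obtain ⟨pB, hBint, hM2, nodupB, chordB⟩ :=
    exists_min_walk (reachSet G S w) hxy hnadj (interior_walk hxb hyb' rB hrB)
  set N := pA.length with hNdef
  set M := pB.length with hMdef
  set n := N + M with hndef
  have hcross : ∀ c d : V, c ∈ reachSet G S u → d ∈ reachSet G S w → c ≠ d ∧ ¬ G.Adj c d :=
    fun c d hc hd => reachSet_cross hsep hc hd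
  set F : ℕ → V := fun t => if t ≤ N then pA.getVert t else pB.getVert (n - t) with hF
  have hFA : ∀ i, i ≤ N → F i = pA.getVert i := fun i hi => if_pos hi
  have hFB : ∀ j, N < j → F j = pB.getVert (n - j) := fun j hj => if_neg (by omega)
  have hB0 : pB.getVert 0 = x := pB.getVert_zero
  have hBM : pB.getVert M = y := pB.getVert_length
  have hA0 : pA.getVert 0 = x := pA.getVert_zero
  have hAN : pA.getVert N = y := pA.getVert_length
  -- injectivity on ℕ indices
  have inj : ∀ i j, i < j → j < n → F i ≠ F j := by
    intro i j hij hjn heq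
    by_cases hjN : j ≤ N
    · rw [hFA i (by omega), hFA j hjN] at heq
      exact nodupA i j hij hjN heq
    · push_neg at hjN
      have hsj1 : 1 ≤ n - j := by omega
      have hsjM : n - j ≤ M - 1 := by omega
      rw [hFB j hjN] at heq
      by_cases hiN : i ≤ N
      · rw [hFA i hiN] at heq
        rcases Nat.lt_trichotomy i 0 with h0 | h0 | h0
        · omega
        · subst h0
          rw [hA0] at heq
          exact nodupB 0 (n - j) (by omega) (by omega) (hB0.trans heq)
        · rcases eq_or_lt_of_le hiN with hiN' | hiN'
          · subst hiN'
            rw [hAN] at heq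
            exact nodupB (n - j) M (by omega) le_rfl (hBM.trans heq).symm
          · exact (hcross _ _ (hAint i h0 hiN') (hBint (n - j) (by omega) (by omega))).1 heq
      · push_neg at hiN
        rw [hFB i hiN] at heq
        exact nodupB (n - j) (n - i) (by omega) (by omega) heq.symm
  -- adjacency characterization
  have key : ∀ i j, i < j → j < n →
      (G.Adj (F i) (F j) ↔ (j = i + 1 ∨ (i = 0 ∧ j = n - 1))) := by
    intro i j hij hjn
    by_cases hjN : j ≤ N
    · rw [hFA i (by omega), hFA j hjN, chordA i j hij hjN]
      omega
    · push_neg at hjN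
      have hsj1 : 1 ≤ n - j := by omega
      have hsjM : n - j ≤ M - 1 := by omega
      rw [hFB j hjN]
      by_cases hiN : i ≤ N
      · rw [hFA i hiN]
        rcases Nat.lt_trichotomy i 0 with h0 | h0 | h0
        · omega
        · subst h0
          have hc := chordB 0 (n - j) (by omega) (by omega)
          rw [hB0] at hc
          rw [hA0, hc]
          omega
        · rcases eq_or_lt_of_le hiN with hiN' | hiN'
          · subst hiN'
            have hc := chordB (n - j) M (by omega) le_rfl
            rw [hBM] at hc
            rw [hAN, G.adj_comm, hc]
            omega
          · have hfalse := (hcross _ _ (hAint i h0 hiN') (hBint (n - j) (by omega) (by omega))).2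
            constructor
            · intro h; exact absurd h hfalse
            · intro h; omega
      · push_neg at hiN
        rw [hFB i hiN, G.adj_comm, chordB (n - j) (n - i) (by omega) (by omega)]
        omega
  have h4 : 4 ≤ n := by omega
  refine (hG n h4).false ?_
  refine ⟨⟨fun i => F i.val, ?_⟩, ?_⟩
  · intro i j heq
    simp only at heq
    rcases Nat.lt_trichotomy i.val j.val with h | h | h
    · exact absurd heq (inj i.val j.val h j.isLt)
    · exact Fin.ext h
    · exact absurd heq.symm (inj j.val i.val h i.isLt)
  · intro i j
    show G.Adj (F i.val) (F j.val) ↔ (cycleGraph n).Adj i j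
    rcases Nat.lt_trichotomy i.val j.val with h | h | h
    · rw [key i.val j.val h j.isLt, cyc_adj_val h4]
      have := i.isLt
      omega
    · have : i = j := Fin.ext h
      subst this
      simp
    · rw [G.adj_comm, (cycleGraph n).adj_comm, key j.val i.val h i.isLt, cyc_adj_val h4]
      have := j.isLt
      omega
universe u

lemma side_simplicial {V : Type u} [Fintype V] {G : SimpleGraph V} (n : ℕ)
    (IH : ∀ {W : Type u} [Fintype W] (H : SimpleGraph W), Fintype.card W ≤ n → Chordal H →
      ∀ a b : W, a ≠ b → ¬H.Adj a b →
        ∃ v v' : W, v ≠ v' ∧ ¬H.Adj v v' ∧ IsSimplicial H v ∧ IsSimplicial H v')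
    (hG : Chordal G) (hcard : Fintype.card V ≤ n + 1) {S : Set V} {u w : V}
    (hS : IsMinUWSeparator G S u w) (hclq : G.IsClique S) :
    ∃ v ∈ reachSet G S u, IsSimplicial G v := by
  classical
  obtain ⟨hne, hnadj, huS, hwS, hsep, hmin⟩ := hS
  set A := reachSet G S u with hA
  have huA : u ∈ A := self_mem_reachSet huS
  set D : Set V := A ∪ S with hD
  have hwD : w ∉ D := by
    rintro (h | h)
    · obtain ⟨p, hp⟩ := h
      obtain ⟨z, hz, hzS⟩ := hsep p
      exact hp z hz hzS
    · exact hwS h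
  have hclosure : ∀ z z', z ∈ A → G.Adj z z' → z' ∈ D := by
    intro z z' hz hadj
    by_cases h : z' ∈ S
    · exact Or.inr h
    · exact Or.inl (reachSet_adj hz hadj h)
  have hcardD : Fintype.card ↥D ≤ n := by
    have h3 : Fintype.card ↥D = D.ncard := by
      rw [← Nat.card_eq_fintype_card, Nat.card_coe_set_eq]
    have h4 : D.ncard < Fintype.card V := by
      have hss : D ⊂ Set.univ := ⟨Set.subset_univ D, fun h => hwD (h (Set.mem_univ w))⟩
      have := Set.ncard_lt_ncard hss (Set.toFinite _)
      simpa [Set.ncard_univ, Nat.card_eq_fintype_card] using this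
    omega
  have hG' : Chordal (G.induce D) := chordal_induce hG D
  by_cases hcomp : ∀ c d : ↥D, c ≠ d → (G.induce D).Adj c d
  · refine ⟨u, huA, ?_⟩
    intro z1 hz1 z2 hz2 hne'
    have h1 : G.Adj u z1 := hz1
    have h2 : G.Adj u z2 := hz2
    have m1 : z1 ∈ D := hclosure _ _ huA h1
    have m2 : z2 ∈ D := hclosure _ _ huA h2
    have := hcomp ⟨z1, m1⟩ ⟨z2, m2⟩ (by simpa [Subtype.ext_iff] using hne')
    simpa [comap_adj] using this
  · push_neg at hcomp
    obtain ⟨c, d, hcd, hncd⟩ := hcomp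
    obtain ⟨v, v', hvv', hnadjv, hsv, hsv'⟩ := IH (G.induce D) hcardD hG' c d hcd hncd
    have hnotboth : v.1 ∉ S ∨ v'.1 ∉ S := by
      by_contra h
      push_neg at h
      have : G.Adj v.1 v'.1 := hclq h.1 h.2 (fun he => hvv' (Subtype.ext he))
      exact hnadjv (by simpa [comap_adj] using this)
    rcases hnotboth with h | h
    · have hvA : v.1 ∈ A := v.2.resolve_right h
      refine ⟨v.1, hvA, simplicial_of_induce v.2 (fun z hz => hclosure _ _ hvA hz) ?_⟩
      convert hsv
    · have hvA : v'.1 ∈ A := v'.2.resolve_right h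
      refine ⟨v'.1, hvA, simplicial_of_induce v'.2 (fun z hz => hclosure _ _ hvA hz) ?_⟩
      convert hsv'

lemma dirac_main : ∀ (n : ℕ) {V : Type u} [Fintype V] (G : SimpleGraph V),
    Fintype.card V ≤ n → Chordal G → ∀ u w : V, u ≠ w → ¬G.Adj u w →
      ∃ v v' : V, v ≠ v' ∧ ¬G.Adj v v' ∧ IsSimplicial G v ∧ IsSimplicial G v' := by
  intro n
  induction n with
  | zero =>
    intro V _ G hcard _ u w _ _
    have : 0 < Fintype.card V := Fintype.card_pos_iff.mpr ⟨u⟩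
    omega
  | succ n ih =>
    intro V _ G hcard hG u w hne hnadj
    obtain ⟨S, hS⟩ := exists_min_sep hne hnadj
    have hclq := minsep_clique hG hS
    obtain ⟨v, hvA, hsv⟩ := side_simplicial n (fun {W} _ H => ih H) hG hcard hS hclq
    obtain ⟨v', hv'B, hsv'⟩ :=
      side_simplicial n (fun {W} _ H => ih H) hG hcard (minUW_symm hS) hclq
    have hcross := reachSet_cross hS.2.2.2.2.1 hvA hv'B
    exact ⟨v, v', hcross.1, hcross.2, hsv, hsv'⟩


end DiracAux

theorem stmt4 [Fintype V] (G : SimpleGraph V) (hG : Chordal G)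
    (hnc : ∃ u w : V, u ≠ w ∧ ¬ G.Adj u w) :
    ∃ v w : V, v ≠ w ∧ ¬ G.Adj v w ∧ IsSimplicial G v ∧ IsSimplicial G w := by
  obtain ⟨u, w', hne, hnadj⟩ := hnc
  exact dirac_main (Fintype.card V) G le_rfl hG u w' hne hnadj
end

section
/- In a finite chordal graph G that is not a complete graph, there exist two non-adjacent special simplicial vertices, where a simplicial vertex v is special if the set S_v = (N(v) ∪ {v}) ∩ N(V \ (N(v) ∪ {v})) is a minimal separator of G and is inclusion-maximal among all minimal separators of G. -/
open SimpleGraph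

variable {V : Type*}

namespace Chordal5

variable {G : SimpleGraph V}

/-- reachability avoiding a set -/
def RA (G : SimpleGraph V) (X : Set V) (a b : V) : Prop :=
  ∃ p : G.Walk a b, ∀ x ∈ p.support, x ∉ X

lemma RA.refl (h : a ∉ X) : RA G X a a := ⟨Walk.nil, by simp [h]⟩

lemma RA.notMem_left (h : RA G X a b) : a ∉ X := by
  obtain ⟨p, hp⟩ := h; exact hp a p.start_mem_support

lemma RA.notMem_right (h : RA G X a b) : b ∉ X := by
  obtain ⟨p, hp⟩ := h; exact hp b p.end_mem_support

lemma RA.symm (h : RA G X a b) : RA G X b a := by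
  obtain ⟨p, hp⟩ := h
  exact ⟨p.reverse, by simpa using hp⟩

lemma RA.trans (h : RA G X a b) (h' : RA G X b c) : RA G X a c := by
  obtain ⟨p, hp⟩ := h; obtain ⟨q, hq⟩ := h'
  refine ⟨p.append q, ?_⟩
  intro x hx
  rcases (Walk.mem_support_append_iff _ _).1 hx with h | h
  exacts [hp x h, hq x h]

lemma RA.adj_extend (h : RA G X a b) (hadj : G.Adj b c) (hc : c ∉ X) :
    RA G X a c := by
  obtain ⟨p, hp⟩ := h
  refine ⟨p.concat hadj, ?_⟩
  intro x hx
  rw [Walk.support_concat, List.mem_append] at hx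
  rcases hx with h | h
  rotate_left
  · simp only [List.mem_singleton] at h
    subst h; exact hc
  · exact hp x h

lemma not_RA_of_separates (hS : Separates G X u w) : ¬ RA G X u w := by
  rintro ⟨p, hp⟩
  obtain ⟨x, hx, hxS⟩ := hS p
  exact hp x hx hxS

/-- generalized closure induction along walks avoiding X -/
lemma closed_of_walk {P : Set V} {a : V}
    (hstep : ∀ q y, q ∈ P → RA G X a q → G.Adj q y → y ∉ X → y ∈ P) :
    ∀ {b c} (p : G.Walk b c), (∀ x ∈ p.support, x ∉ X) → b ∈ P → RA G X a b → c ∈ P := by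
  intro b c p
  induction p with
  | nil => intro _ hb _; exact hb
  | cons hadj q ih =>
    rename_i u v w
    intro hsup hu hra
    have hvX : v ∉ X := hsup v (by simp)
    have huX : u ∉ X := hsup u (by simp)
    have hv : v ∈ P := hstep u v hu hra hadj hvX
    exact ih (fun x hx => hsup x (by simp [hx])) hv (hra.adj_extend hadj hvX)

lemma RA.closed {P : Set V} {a : V} (ha : a ∈ P)
    (hstep : ∀ q y, q ∈ P → RA G X a q → G.Adj q y → y ∉ X → y ∈ P)
    (h : RA G X a b) : b ∈ P := by
  obtain ⟨p, hp⟩ := h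
  exact closed_of_walk hstep p hp ha (RA.refl (hp a p.start_mem_support))


/-- the connected component of `a` in `G - X`, as a set -/
def comp (G : SimpleGraph V) (X : Set V) (a : V) : Set V := {z | RA G X a z}

lemma comp_self (h : a ∉ X) : a ∈ comp G X a := RA.refl h

lemma comp_disjoint_sep : comp G X a ∩ X = ∅ := by
  ext z; simp only [Set.mem_inter_iff, Set.mem_empty_iff_false, iff_false, not_and]
  intro hz; exact hz.notMem_right

lemma comp_eq_of_mem (hb : b ∈ comp G X a) : comp G X b = comp G X a := by
  ext z; exact ⟨fun h => hb.trans h, fun h => hb.symm.trans h⟩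

lemma comp_adj (hq : q ∈ comp G X a) (hadj : G.Adj q y) (hy : y ∉ X) :
    y ∈ comp G X a := hq.adj_extend hadj hy

/-- two comps sharing a point are equal -/
lemma comp_eq_comp_of_mem (h1 : z ∈ comp G X a) (h2 : z ∈ comp G X b) :
    comp G X a = comp G X b := by
  rw [← comp_eq_of_mem h1, comp_eq_of_mem h2]

/-- first-t lemma: a walk from u hitting T only at t yields a neighbor of t in u's comp -/
lemma exists_nbr_of_walk {T : Set V} {t : V} :
    ∀ {u z : V} (p : G.Walk u z), u ∉ T → t ∈ T → (∀ v ∈ p.support, v ∈ T → v = t) →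
      t ∈ p.support → ∃ y, G.Adj t y ∧ RA G T u y := by
  intro u z p
  induction p with
  | nil =>
    intro hu ht _ hmem
    simp only [Walk.support_nil, List.mem_singleton] at hmem
    exact absurd (hmem ▸ ht) hu
  | @cons a b c hadj q ih =>
    intro hu ht honly hmem
    by_cases hb : b = t
    · subst hb; exact ⟨a, hadj.symm, RA.refl hu⟩
    · have hbT : b ∉ T := fun hbT => hb (honly b (by simp) hbT)
      have htq : t ∈ q.support := by
        rw [Walk.support_cons] at hmem
        rcases List.mem_cons.1 hmem with rfl | h
        · exact absurd ht hu
        · exact h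
      obtain ⟨y, hy, hray⟩ := ih hbT ht (fun v hv => honly v (by simp [hv])) htq
      refine ⟨y, hy, ?_⟩
      obtain ⟨r, hr⟩ := hray
      exact ⟨Walk.cons hadj r, by
        intro x hx
        rw [Walk.support_cons] at hx
        rcases List.mem_cons.1 hx with rfl | h
        exacts [hu, hr x h]⟩

/-- L2: fullness of the endpoint components of a minimal u-w separator. -/
lemma full_comp_of_minSep (h : IsMinUWSeparator G T u w) :
    ∀ t ∈ T, ∃ y ∈ comp G T u, G.Adj t y := by
  intro t ht
  have hne : T \ {t} ⊂ T := by
    constructor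
    · intro x hx; exact hx.1
    · intro hsub; exact (hsub ht).2 rfl
  have hns := h.2.2.2.2.2 _ hne
  simp only [Separates, not_forall] at hns
  obtain ⟨p, hp⟩ := hns
  push_neg at hp
  have honly : ∀ v ∈ p.support, v ∈ T → v = t := by
    intro v hv hvT
    by_contra hne'
    exact hp v hv ⟨hvT, hne'⟩
  have htp : t ∈ p.support := by
    obtain ⟨x, hx, hxT⟩ := h.2.2.2.2.1 p
    exact (honly x hx hxT) ▸ hx
  obtain ⟨y, hy, hray⟩ := exists_nbr_of_walk p h.2.2.1 ht honly htp
  exact ⟨y, hray, hy⟩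

lemma minSep_symm (h : IsMinUWSeparator G T u w) : IsMinUWSeparator G T w u := by
  obtain ⟨h1, h2, h3, h4, h5, h6⟩ := h
  refine ⟨h1.symm, fun ha => h2 ha.symm, h4, h3, ?_, ?_⟩
  · intro p
    obtain ⟨x, hx, hxT⟩ := h5 p.reverse
    exact ⟨x, by simpa using hx, hxT⟩
  · intro S' hS' hsep
    refine h6 S' hS' ?_
    intro p
    obtain ⟨x, hx, hxT⟩ := hsep p.reverse
    exact ⟨x, by simpa using hx, hxT⟩

/-- comps of u and w are disjoint -/
lemma comp_ne_of_minSep (h : IsMinUWSeparator G T u w) :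
    comp G T u ∩ comp G T w = ∅ := by
  ext z
  simp only [Set.mem_inter_iff, Set.mem_empty_iff_false, iff_false, not_and]
  intro hz hz'
  exact not_RA_of_separates h.2.2.2.2.1 (hz.trans hz'.symm)


open scoped Classical in
/-- existence of a minimal separator inside a separating set -/
lemma exists_minSep_subset [Fintype V] {A : Set V} {u w : V} (hu : u ∉ A) (hw : w ∉ A)
    (hne : u ≠ w) (hnadj : ¬ G.Adj u w) (hsep : Separates G A u w) :
    ∃ T, T ⊆ A ∧ IsMinUWSeparator G T u w := by
  classical
  set P : ℕ → Prop := fun n => ∃ T : Set V, T ⊆ A ∧ Separates G T u w ∧ T.ncard = n with hP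
  have hex : ∃ n, P n := ⟨A.ncard, A, le_refl _, hsep, rfl⟩
  obtain ⟨T, hTA, hTsep, hTcard⟩ := Nat.find_spec hex
  refine ⟨T, hTA, hne, hnadj, fun h => hu (hTA h), fun h => hw (hTA h), hTsep, ?_⟩
  intro S' hS' hsep'
  have h1 : S'.ncard < T.ncard :=
    Set.ncard_lt_ncard hS' (Set.toFinite T)
  have h2 : P S'.ncard := ⟨S', hS'.1.trans hTA, hsep', rfl⟩
  exact absurd h2 (Nat.find_min hex (by omega))

/-- existence of an inclusion-maximal minimal separator -/
lemma exists_maximal_minSep [Fintype V] (h : ∃ S : Set V, IsMinSeparator G S) :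
    ∃ S : Set V, IsMinSeparator G S ∧
      ∀ S', IsMinSeparator G S' → S ⊆ S' → S' = S := by
  classical
  set P : ℕ → Prop := fun n => ∃ S : Set V, IsMinSeparator G S ∧ S.ncard = n with hP
  obtain ⟨S0, hS0⟩ := h
  have hcard : ∀ (S : Set V), S.ncard ≤ Fintype.card V := by
    intro S
    simpa [Set.ncard_univ] using Set.ncard_le_ncard (Set.subset_univ S) Set.finite_univ
  have hspec : P (Nat.findGreatest P (Fintype.card V)) :=
    Nat.findGreatest_spec (hcard S0) ⟨S0, hS0, rfl⟩
  obtain ⟨S, hS, hScard⟩ := hspec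
  refine ⟨S, hS, ?_⟩
  intro S' hS' hsub
  have h1 : S'.ncard ≤ Nat.findGreatest P (Fintype.card V) :=
    Nat.le_findGreatest (hcard S') ⟨S', hS', rfl⟩
  exact (Set.eq_of_subset_of_ncard_le hsub (by omega) (Set.toFinite S')).symm

/-- exit lemma: a walk avoiding X from F to outside F must meet R (the boundary of F) -/
lemma exists_boundary {F R X : Set V}
    (hcl : ∀ q y, q ∈ F → G.Adj q y → y ∉ R → y ∈ F) :
    ∀ {a b} (p : G.Walk a b), (∀ v ∈ p.support, v ∉ X) → a ∈ F → b ∉ F →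
      ∃ r ∈ R, RA G X a r := by
  intro a b p
  induction p with
  | nil => intro _ ha hb; exact absurd ha hb
  | @cons a c b hadj q ih =>
    intro hav ha hb
    have hcX : c ∉ X := hav c (by simp)
    have haX : a ∉ X := hav a (by simp)
    by_cases hcR : c ∈ R
    · exact ⟨c, hcR, (RA.refl haX).adj_extend hadj hcX⟩
    · have hcF : c ∈ F := hcl a c ha hadj hcR
      obtain ⟨r, hr, hra⟩ := ih (fun v hv => hav v (by simp [hv])) hcF hb
      exact ⟨r, hr, ((RA.refl haX).adj_extend hadj hcX).trans hra⟩

/-- all support vertices of an avoiding walk are RA-reachable -/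
lemma RA_of_mem_support {X : Set V} :
    ∀ {a b} (p : G.Walk a b), (∀ v ∈ p.support, v ∉ X) → ∀ v ∈ p.support, RA G X a v := by
  intro a b p
  induction p with
  | nil =>
    intro hav v hv
    simp only [Walk.support_nil, List.mem_singleton] at hv
    subst hv; exact RA.refl (hav v (by simp))
  | @cons a c b hadj q ih =>
    intro hav v hv
    have hcX : c ∉ X := hav c (by simp)
    have haX : a ∉ X := hav a (by simp)
    rw [Walk.support_cons] at hv
    rcases List.mem_cons.1 hv with rfl | hv'
    · exact RA.refl haX
    · exact ((RA.refl haX).adj_extend hadj hcX).trans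
        (ih (fun x hx => hav x (by simp [hx])) v hv')


lemma RA.anti {X0 X : Set V} (hsub : X0 ⊆ X) (h : RA G X a b) : RA G X0 a b := by
  obtain ⟨p, hp⟩ := h
  exact ⟨p, fun x hx hxX0 => hp x hx (hsub hxX0)⟩

/-- there is a full component of S disjoint from any given component -/
lemma other_comp (hS : IsMinSeparator G S) (x0 : V) :
    ∃ z, z ∉ S ∧ comp G S z ∩ comp G S x0 = ∅ ∧
      ∀ s ∈ S, ∃ y ∈ comp G S z, G.Adj s y := by
  obtain ⟨u, w, h⟩ := hS
  by_cases huv : u ∈ comp G S x0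
  · refine ⟨w, h.2.2.2.1, ?_, full_comp_of_minSep (minSep_symm h)⟩
    rw [← comp_eq_of_mem huv]
    rw [Set.inter_comm]
    exact comp_ne_of_minSep h
  · refine ⟨u, h.2.2.1, ?_, full_comp_of_minSep h⟩
    ext y
    simp only [Set.mem_inter_iff, Set.mem_empty_iff_false, iff_false, not_and]
    intro h1 h2
    exact huv ((comp_eq_comp_of_mem h1 h2) ▸ comp_self h.2.2.1)

/-- Case A : if C ∪ S is a clique, every vertex of C is special. -/
lemma caseA [Fintype V] {S : Set V} {x0 : V}
    (hS : IsMinSeparator G S)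
    (hmax : ∀ S', IsMinSeparator G S' → S ⊆ S' → S' = S)
    (hclq : G.IsClique (comp G S x0 ∪ S)) {v : V} (hv : v ∈ comp G S x0) :
    IsSimplicial G v ∧ IsSpecial G v ∧ Qv G v ⊆ comp G S x0 ∪ S := by
  set C := comp G S x0 with hC
  have hvC : v ∈ C ∪ S := Or.inl hv
  have hQ : Qv G v = C ∪ S := by
    ext y
    simp only [Qv, Set.mem_insert_iff, mem_neighborSet]
    constructor
    · rintro (rfl | hy)
      · exact hvC
      · by_cases hyS : y ∈ S
        · exact Or.inr hyS
        · exact Or.inl (comp_adj hv hy hyS)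
    · intro hy
      by_cases hyv : y = v
      · exact Or.inl hyv
      · exact Or.inr (hclq hvC hy (fun h => hyv h.symm))
  have hsimp : IsSimplicial G v := by
    apply hclq.subset
    intro y hy
    have : y ∈ Qv G v := Or.inr hy
    rw [hQ] at this
    exact this
  have hSv : Sv G v = S := by
    ext x
    simp only [Sv, Set.mem_setOf_eq]
    constructor
    · rintro ⟨hxQ, y, hyQ, hxy⟩
      rw [hQ] at hxQ hyQ
      rcases hxQ with hxC | hxS
      · exfalso
        by_cases hyS : y ∈ S
        · exact hyQ (Or.inr hyS)
        · exact hyQ (Or.inl (comp_adj hxC hxy hyS))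
      · exact hxS
    · intro hxS
      obtain ⟨z, hzS, hdisj, hfull2⟩ := other_comp hS x0
      obtain ⟨y, hyz, hxy⟩ := hfull2 x hxS
      refine ⟨by rw [hQ]; exact Or.inr hxS, y, ?_, hxy⟩
      rw [hQ]
      rintro (hyC | hyS)
      · have : y ∈ comp G S z ∩ comp G S x0 := ⟨hyz, hyC⟩
        rw [hdisj] at this
        exact this
      · exact hyz.notMem_right hyS
  refine ⟨hsimp, ⟨hsimp, ?_, ?_⟩, by rw [hQ]⟩
  · rw [hSv]; exact hS
  · intro S' h1 h2
    rw [hSv] at h2 ⊢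
    exact hmax S' h1 h2

/-- Case B : if C ∪ S is not a clique, produce a strictly smaller full component
of some minimal separator. -/
lemma descent [Fintype V] {S : Set V} {x0 : V}
    (hS : IsMinSeparator G S) (hSclq : G.IsClique S) (hx0 : x0 ∉ S)
    (hfull : ∀ s ∈ S, ∃ y ∈ comp G S x0, G.Adj s y)
    (hnc : ¬ G.IsClique (comp G S x0 ∪ S)) :
    ∃ (T : Set V) (x : V), IsMinSeparator G T ∧ x ∉ T ∧
      comp G T x ⊆ comp G S x0 ∧ comp G T x ≠ comp G S x0 ∧
      (∀ t ∈ T, ∃ y ∈ comp G T x, G.Adj t y) := by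
  classical
  set C := comp G S x0 with hC
  have hCS : ∀ q ∈ C, ∀ y, G.Adj q y → y ∉ S → y ∈ C := fun q hq y ha hy => comp_adj hq ha hy
  have hCdisj : ∀ {z}, z ∈ C → z ∉ S := fun hz => hz.notMem_right
  by_cases hcs : ∃ x ∈ C, ∃ y ∈ S, ¬ G.Adj x y
  · -- B2 : x ∈ C, y ∈ S non-adjacent
    obtain ⟨x, hxC, y, hyS, hnadj⟩ := hcs
    have hxy : x ≠ y := fun h => (hCdisj hxC) (h ▸ hyS)
    set A : Set V := (C \ {x}) ∪ (S \ {y}) with hA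
    have hxA : x ∉ A := by
      rintro (⟨_, hx⟩ | ⟨hx, _⟩)
      · exact hx rfl
      · exact (hCdisj hxC) hx
    have hyA : y ∉ A := by
      rintro (⟨hy, _⟩ | ⟨_, hy⟩)
      · exact (hCdisj hy) hyS
      · exact hy rfl
    have hsepA : Separates G A x y := by
      intro p
      cases p with
      | nil => exact absurd rfl hxy
      | cons hadj q =>
        rename_i c
        have hcC : c ∈ C ∪ S := by
          by_cases hcS : c ∈ S
          · exact Or.inr hcS
          · exact Or.inl (comp_adj hxC hadj hcS)
        refine ⟨c, by simp, ?_⟩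
        rcases hcC with hc | hc
        · left
          refine ⟨hc, ?_⟩
          simp only [Set.mem_singleton_iff]
          rintro rfl
          exact G.irrefl hadj
        · right
          refine ⟨hc, ?_⟩
          simp only [Set.mem_singleton_iff]
          rintro rfl
          exact hnadj hadj
    obtain ⟨T, hTA, hT⟩ := exists_minSep_subset hxA hyA hxy hnadj hsepA
    have hyT : y ∉ T := hT.2.2.2.1
    have hxT : x ∉ T := hT.2.2.1
    have hsub : comp G T x ⊆ C := by
      intro z hz
      refine RA.closed hxC ?_ hz
      intro q y' hq hraq hadj hy'T
      by_cases hy'S : y' ∈ S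
      · exfalso
        have hray' : RA G T x y' := hraq.adj_extend hadj hy'T
        by_cases hy'y : y' = y
        · exact not_RA_of_separates hT.2.2.2.2.1 (hy'y ▸ hray')
        · have hadj2 : G.Adj y' y := hSclq hy'S hyS hy'y
          exact not_RA_of_separates hT.2.2.2.2.1 (hray'.adj_extend hadj2 hyT)
      · exact comp_adj hq hadj hy'S
    refine ⟨T, x, ⟨x, y, hT⟩, hxT, hsub, ?_, full_comp_of_minSep hT⟩
    · intro heq
      obtain ⟨d, hdC, hdy⟩ := hfull y hyS
      have hdT : d ∈ comp G T x := heq ▸ hdC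
      exact not_RA_of_separates hT.2.2.2.2.1 (hdT.adj_extend hdy.symm hyT)
  · -- B1 : C is completely adjacent to S, so the non-adjacent pair is inside C
    push_neg at hcs
    obtain ⟨x, hxCS, y, hyCS, hxy, hnadj⟩ := by
      rw [SimpleGraph.isClique_iff] at hnc
      simpa [Set.Pairwise] using hnc
    -- both x and y must lie in C
    have hpair : x ∈ C ∧ y ∈ C := by
      rcases hxCS with hx | hx <;> rcases hyCS with hy | hy
      · exact ⟨hx, hy⟩
      · exact absurd (hcs x hx y hy) hnadj
      · exact absurd (hcs y hy x hx).symm hnadj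
      · exact absurd (hSclq hx hy hxy) hnadj
    obtain ⟨hxC, hyC⟩ := hpair
    set A : Set V := Set.univ \ {x, y} with hA
    have hxA : x ∉ A := by simp [hA]
    have hyA : y ∉ A := by simp [hA]
    have hsepA : Separates G A x y := by
      intro p
      cases p with
      | nil => exact absurd rfl hxy
      | cons hadj q =>
        rename_i c
        refine ⟨c, by simp, Set.mem_univ c, ?_⟩
        simp only [Set.mem_insert_iff, Set.mem_singleton_iff]
        rintro (rfl | rfl)
        · exact G.irrefl hadj
        · exact hnadj hadj
    obtain ⟨T, hTA, hT⟩ := exists_minSep_subset hxA hyA hxy hnadj hsepA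
    have hxT : x ∉ T := hT.2.2.1
    have hyT : y ∉ T := hT.2.2.2.1
    have hST : S ⊆ T := by
      intro s hsS
      by_contra hsT
      have hsx : G.Adj s x := hcs x hxC s hsS |>.symm
      have hsy : G.Adj s y := (hcs y hyC s hsS).symm
      exact not_RA_of_separates hT.2.2.2.2.1
        (((RA.refl hxT).adj_extend hsx.symm hsT).adj_extend hsy hyT)
    have hsub : comp G T x ⊆ C := by
      intro z hz
      refine RA.closed hxC ?_ hz
      intro q y' hq hraq hadj hy'T
      by_cases hy'S : y' ∈ S
      · exact absurd (hST hy'S) hy'T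
      · exact comp_adj hq hadj hy'S
    refine ⟨T, x, ⟨x, y, hT⟩, hxT, hsub, ?_, full_comp_of_minSep hT⟩
    intro heq
    exact not_RA_of_separates hT.2.2.2.2.1 (heq ▸ hyC : y ∈ comp G T x)



/-- sequences from s to t with interior in C -/
def seqP (G : SimpleGraph V) (C : Set V) (s t : V) (n : ℕ) : Prop :=
  ∃ f : ℕ → V, f 0 = s ∧ f n = t ∧ (∀ i, i < n → G.Adj (f i) (f (i+1))) ∧
    (∀ i, 0 < i → i < n → f i ∈ C)

lemma seqP_shorter {C : Set V} {s t : V} {f : ℕ → V} {n : ℕ}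
    (h0 : f 0 = s) (hn : f n = t) (hadj : ∀ i, i < n → G.Adj (f i) (f (i+1)))
    (hC : ∀ i, 0 < i → i < n → f i ∈ C) {i d : ℕ} (hd : 1 ≤ d)
    (hin : i + d + 1 ≤ n) (hglue : G.Adj (f i) (f (i + d + 1))) :
    seqP G C s t (n - d) := by
  refine ⟨fun k => if k ≤ i then f k else f (k + d), ?_, ?_, ?_, ?_⟩
  · simp only [Nat.zero_le, if_pos]; exact h0
  · have h1 : ¬ (n - d ≤ i) := by omega
    simp only [h1, if_neg, if_false]
    have h2 : n - d + d = n := by omega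
    rw [h2]; exact hn
  · intro k hk
    by_cases h1 : k + 1 ≤ i
    · have h2 : k ≤ i := by omega
      simp only [h1, h2, if_pos]
      exact hadj k (by omega)
    · by_cases h2 : k ≤ i
      · have hki : k = i := by omega
        subst hki
        simp only [h1, h2, if_pos, if_neg, if_false]
        have h3 : k + 1 + d = k + d + 1 := by omega
        rw [h3]; exact hglue
      · have h3 : ¬ (k + 1 ≤ i) := by omega
        simp only [h2, h3, if_neg, if_false]
        have h4 : k + 1 + d = (k + d) + 1 := by omega
        rw [h4]
        exact hadj (k + d) (by omega)
  · intro k hk1 hk2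
    by_cases h1 : k ≤ i
    · simp only [h1, if_pos]
      exact hC k hk1 (by omega)
    · simp only [h1, if_neg, if_false]
      exact hC (k + d) (by omega) (by omega)

lemma seqP_trunc {C : Set V} {s t : V} {f : ℕ → V} {n : ℕ}
    (h0 : f 0 = s) (hadj : ∀ i, i < n → G.Adj (f i) (f (i+1)))
    (hC : ∀ i, 0 < i → i < n → f i ∈ C) {j : ℕ} (hj : j ≤ n) (hjt : f j = t) :
    seqP G C s t j :=
  ⟨f, h0, hjt, fun i hi => hadj i (by omega), fun i h1 h2 => hC i h1 (by omega)⟩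

/-- existence of a sequence through a component -/
lemma seqP_exists {T : Set V} {u s t as bt : V}
    (has : as ∈ comp G T u) (hbt : bt ∈ comp G T u)
    (hsa : G.Adj s as) (hbt' : G.Adj bt t) :
    ∃ n, seqP G (comp G T u) s t n := by
  obtain ⟨p, hp⟩ : RA G T as bt := has.symm.trans hbt
  refine ⟨p.length + 2, fun i => if i = 0 then s else if i ≤ p.length + 1 then p.getVert (i-1) else t,
    by simp, ?_, ?_, ?_⟩
  · have h1 : ¬ (p.length + 2 = 0) := by omega
    have h2 : ¬ (p.length + 2 ≤ p.length + 1) := by omega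
    simp only [h1, h2, if_neg, if_false]
  · intro i hi
    by_cases h0 : i = 0
    · subst h0
      have h1 : (1:ℕ) ≤ p.length + 1 := by omega
      simp only [if_pos, h1, if_true, Nat.sub_self]
      have : ¬ (1 = 0) := by omega
      simp only [this, if_neg, if_false, if_pos, h1, if_true]
      rw [Walk.getVert_zero]
      exact hsa
    · by_cases h1 : i ≤ p.length
      · have h2 : ¬ (i + 1 = 0) := by omega
        have h3 : i + 1 ≤ p.length + 1 := by omega
        have h4 : i ≤ p.length + 1 := by omega
        simp only [h0, h2, h3, h4, if_neg, if_false, if_pos, if_true]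
        have h5 : i - 1 + 1 = i := by omega
        have := p.adj_getVert_succ (i := i - 1) (by omega)
        rwa [h5] at this
      · have h2 : i = p.length + 1 := by omega
        subst h2
        have h3 : ¬ (p.length + 1 = 0) := by omega
        have h4 : p.length + 1 ≤ p.length + 1 := le_refl _
        have h5 : ¬ (p.length + 1 + 1 = 0) := by omega
        have h6 : ¬ (p.length + 1 + 1 ≤ p.length + 1) := by omega
        simp only [h3, h4, h5, h6, if_neg, if_false, if_pos, if_true]
        have h7 : p.length + 1 - 1 = p.length := by omega
        rw [h7, Walk.getVert_length]
        exact hbt'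
  · intro i hi1 hi2
    have h0 : ¬ (i = 0) := by omega
    have h1 : i ≤ p.length + 1 := by omega
    simp only [h0, h1, if_neg, if_false, if_pos, if_true]
    have hmem : p.getVert (i-1) ∈ p.support := by
      rw [Walk.mem_support_iff_exists_getVert]
      exact ⟨i-1, rfl, by omega⟩
    exact has.trans (RA_of_mem_support p hp _ hmem)

/-- minimal sequences are induced paths -/
lemma seq_min_props {C : Set V} {s t : V} (hst : s ≠ t) (hnadj : ¬ G.Adj s t)
    (hex : ∃ n, seqP G C s t n) :
    ∃ (n : ℕ) (f : ℕ → V), 2 ≤ n ∧ f 0 = s ∧ f n = t ∧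
      (∀ i, i < n → G.Adj (f i) (f (i+1))) ∧
      (∀ i, 0 < i → i < n → f i ∈ C) ∧
      (∀ i j, i < j → j ≤ n → j ≠ i + 1 → ¬ G.Adj (f i) (f j)) ∧
      (∀ i j, i < j → j ≤ n → f i ≠ f j) := by
  classical
  obtain ⟨f, h0, hn, hadj, hC⟩ := Nat.find_spec hex
  set n := Nat.find hex with hndef
  have hn2 : 2 ≤ n := by
    rcases Nat.lt_or_ge n 2 with h | h
    · exfalso
      interval_cases n
      · exact hst (h0.symm.trans hn)
      · exact hnadj (h0 ▸ hn ▸ hadj 0 (by omega))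
    · exact h
  refine ⟨n, f, hn2, h0, hn, hadj, hC, ?_, ?_⟩
  · intro i j hij hjn hne hadj'
    have hd : 1 ≤ j - i - 1 := by omega
    have hsp : seqP G C s t (n - (j - i - 1)) := by
      refine seqP_shorter (i := i) (d := j - i - 1) h0 hn hadj hC hd (by omega) ?_
      have : i + (j - i - 1) + 1 = j := by omega
      rw [this]; exact hadj'
    exact Nat.find_min hex (by omega) hsp
  · intro i j hij hjn heq
    rcases Nat.lt_or_ge j n with hjlt | hjge
    · have hd : 1 ≤ j - i := by omega
      have hsp : seqP G C s t (n - (j - i)) := by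
        refine seqP_shorter (i := i) (d := j - i) h0 hn hadj hC hd (by omega) ?_
        have h1 : i + (j - i) + 1 = j + 1 := by omega
        rw [h1, heq]
        exact hadj j hjlt
      exact Nat.find_min hex (by omega) hsp
    · have hjn' : j = n := by omega
      subst hjn'
      have hsp : seqP G C s t i := seqP_trunc h0 hadj hC (by omega) (heq.trans hn)
      exact Nat.find_min hex (by omega) hsp

/-- L1 : every minimal separator of a chordal graph is a clique. -/
lemma minSep_clique [Fintype V] (hG : Chordal G) {T : Set V}
    (hT : IsMinSeparator G T) : G.IsClique T := by
  classical
  intro s hsT t htT hst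
  by_contra hnadj
  obtain ⟨u, w, hmin⟩ := hT
  set Cu := comp G T u with hCudef
  set Cw := comp G T w with hCwdef
  have hdisj := comp_ne_of_minSep hmin
  have hcross_ne : ∀ a ∈ Cu, ∀ b ∈ Cw, a ≠ b := by
    intro a ha b hb h
    have : a ∈ Cu ∩ Cw := ⟨ha, h ▸ hb⟩
    rw [hdisj] at this
    exact this
  have hcross_nadj : ∀ a ∈ Cu, ∀ b ∈ Cw, ¬ G.Adj a b := by
    intro a ha b hb hadj
    have hbT : b ∉ T := hb.notMem_right
    exact hcross_ne b (comp_adj ha hadj hbT) b hb rfl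
  obtain ⟨au, hau, hsau⟩ := full_comp_of_minSep hmin s hsT
  obtain ⟨bu, hbu, htbu⟩ := full_comp_of_minSep hmin t htT
  obtain ⟨aw, haw, hsaw⟩ := full_comp_of_minSep (minSep_symm hmin) s hsT
  obtain ⟨bw, hbw, htbw⟩ := full_comp_of_minSep (minSep_symm hmin) t htT
  obtain ⟨nu, fu, hnu2, hu0, hun, hadju, hCu, hBu, hNu⟩ :=
    seq_min_props hst hnadj (seqP_exists hau hbu hsau htbu.symm)
  obtain ⟨nw, fw, hnw2, hw0, hwn, hadjw, hCw, hBw, hNw⟩ :=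
    seq_min_props hst hnadj (seqP_exists haw hbw hsaw htbw.symm)
  set m := nu + nw with hmdef
  have hm4 : 4 ≤ m := by omega
  set c : ℕ → V := fun k => if k ≤ nu then fu k else fw (m - k) with hcdef
  have hcu : ∀ k, k ≤ nu → c k = fu k := fun k h => if_pos h
  have hcw : ∀ k, nu < k → c k = fw (m - k) := fun k h => if_neg (by omega)
  have ht_eq : fu nu = fw nw := hun.trans hwn.symm
  -- injectivity
  have KEY2 : ∀ k l, k < l → l < m → c k ≠ c l := by
    intro k l hkl hlm
    by_cases hl : l ≤ nu
    · rw [hcu k (by omega), hcu l hl]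
      exact hNu k l hkl hl
    · by_cases hk : nu < k
      · rw [hcw k hk, hcw l (by omega)]
        exact fun h => hNw (m - l) (m - k) (by omega) (by omega) h.symm
      · push_neg at hk
        rw [hcu k hk, hcw l (by omega)]
        have hml1 : 1 ≤ m - l := by omega
        have hml2 : m - l < nw := by omega
        by_cases hk0 : k = 0
        · subst hk0
          rw [hu0, ← hw0]
          exact hNw 0 (m - l) (by omega) (by omega)
        · by_cases hknu : k = nu
          · subst hknu
            rw [ht_eq]
            exact fun h => hNw (m - l) nw hml2 (le_refl _) h.symm
          · exact hcross_ne (fu k) (hCu k (by omega) (by omega))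
              (fw (m - l)) (hCw (m - l) (by omega) (by omega))
  -- non-adjacency of non-consecutive cycle vertices
  have KEYfwd : ∀ k l, k < l → l < m → G.Adj (c k) (c l) →
      (l = k + 1 ∨ (k = 0 ∧ l = m - 1)) := by
    intro k l hkl hlm hadj
    by_contra hcon
    push_neg at hcon
    obtain ⟨hne1, hne2⟩ := hcon
    by_cases hl : l ≤ nu
    · rw [hcu k (by omega), hcu l hl] at hadj
      exact hBu k l hkl hl hne1 hadj
    · by_cases hk : nu < k
      · rw [hcw k hk, hcw l (by omega)] at hadj
        exact hBw (m - l) (m - k) (by omega) (by omega) (by omega) hadj.symm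
      · push_neg at hk
        rw [hcu k hk, hcw l (by omega)] at hadj
        have hml1 : 1 ≤ m - l := by omega
        have hml2 : m - l < nw := by omega
        by_cases hk0 : k = 0
        · subst hk0
          have hlm1 : l ≠ m - 1 := fun h => hne2 rfl h
          rw [hu0, ← hw0] at hadj
          exact hBw 0 (m - l) (by omega) (by omega) (by omega) hadj
        · by_cases hknu : k = nu
          · subst hknu
            rw [ht_eq] at hadj
            have : m - l ≤ nw - 2 := by omega
            exact hBw (m - l) nw hml2 (le_refl _) (by omega) hadj.symm
          · exact hcross_nadj (fu k) (hCu k (by omega) (by omega))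
              (fw (m - l)) (hCw (m - l) (by omega) (by omega)) hadj
  -- adjacency of consecutive cycle vertices
  have KEYbwd : ∀ k l, k < l → l < m → (l = k + 1 ∨ (k = 0 ∧ l = m - 1)) →
      G.Adj (c k) (c l) := by
    intro k l hkl hlm hgood
    rcases hgood with rfl | ⟨rfl, rfl⟩
    · by_cases h1 : k + 1 ≤ nu
      · rw [hcu k (by omega), hcu (k+1) h1]
        exact hadju k (by omega)
      · by_cases h2 : k ≤ nu
        · have hknu : k = nu := by omega
          subst hknu
          rw [hcu k (le_refl _), hcw (k+1) (by omega), ht_eq]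
          have h3 : m - (k + 1) = nw - 1 := by omega
          rw [h3]
          have := hadjw (nw - 1) (by omega)
          have h4 : nw - 1 + 1 = nw := by omega
          rw [h4] at this
          exact this.symm
        · push_neg at h2
          rw [hcw k h2, hcw (k+1) (by omega)]
          have := hadjw (m - (k+1)) (by omega)
          have h4 : m - (k + 1) + 1 = m - k := by omega
          rw [h4] at this
          exact this.symm
    · rw [hcu 0 (by omega), hcw (m-1) (by omega), hu0, ← hw0]
      have h3 : m - (m - 1) = 1 := by omega
      rw [h3]
      exact hadjw 0 (by omega)
  -- build the embedding of the cycle graph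
  have adjchar : ∀ i j : Fin m, i.val < j.val →
      ((cycleGraph m).Adj i j ↔ (j.val = i.val + 1 ∨ (i.val = 0 ∧ j.val = m - 1))) := by
    intro i j hij
    have hjm : j.val < m := j.isLt
    have h1 : (j - i).val = j.val - i.val := by
      rw [Fin.sub_def]
      simp only []
      have e1 : m - i.val + j.val = m + (j.val - i.val) := by omega
      rw [e1, Nat.add_mod_left]
      exact Nat.mod_eq_of_lt (by omega)
    have h2 : (i - j).val = i.val + (m - j.val) := by
      rw [Fin.sub_def]
      simp only []
      have e1 : m - j.val + i.val = i.val + (m - j.val) := by omega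
      rw [e1]
      exact Nat.mod_eq_of_lt (by omega)
    rw [cycleGraph_adj', h1, h2]
    omega
  have hemb : cycleGraph m ↪g G := by
    refine ⟨⟨fun i => c i.val, ?_⟩, ?_⟩
    · intro i j hij
      simp only [] at hij
      rcases lt_trichotomy i.val j.val with h | h | h
      · exact absurd hij (KEY2 i.val j.val h j.isLt)
      · exact Fin.ext h
      · exact absurd hij.symm (KEY2 j.val i.val h i.isLt)
    · intro i j
      show G.Adj (c i.val) (c j.val) ↔ (cycleGraph m).Adj i j
      rcases lt_trichotomy i.val j.val with h | h | h
      · rw [adjchar i j h]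
        exact ⟨KEYfwd i.val j.val h j.isLt, KEYbwd i.val j.val h j.isLt⟩
      · have : i = j := Fin.ext h
        subst this
        simp only [G.irrefl, false_iff]
        exact fun hc => (cycleGraph m).irrefl hc
      · rw [G.adj_comm, (cycleGraph m).adj_comm, adjchar j i h]
        exact ⟨KEYfwd j.val i.val h i.isLt, KEYbwd j.val i.val h i.isLt⟩
  exact (hG m hm4).false hemb

/-- Main lemma : every full component of an inclusion-maximal minimal separator
contains a special simplicial vertex, confined to the component side. -/
lemma main_lemma [Fintype V] (hG : Chordal G) :
    ∀ (n : ℕ) (S : Set V) (x0 : V), (comp G S x0).ncard ≤ n →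
      IsMinSeparator G S → (∀ S', IsMinSeparator G S' → S ⊆ S' → S' = S) →
      x0 ∉ S → (∀ s ∈ S, ∃ y ∈ comp G S x0, G.Adj s y) →
      ∃ v ∈ comp G S x0, IsSimplicial G v ∧ IsSpecial G v ∧
        Qv G v ⊆ comp G S x0 ∪ S := by
  classical
  intro n
  induction n with
  | zero =>
    intro S x0 hcard hS hmax hx0 hfull
    exfalso
    have : x0 ∈ comp G S x0 := comp_self hx0
    have hne : (comp G S x0).Nonempty := ⟨x0, this⟩
    rw [← Set.ncard_pos (Set.toFinite _)] at hne
    omega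
  | succ n ih =>
    intro S x0 hcard hS hmax hx0 hfull
    set C := comp G S x0 with hCdef
    by_cases hclq : G.IsClique (C ∪ S)
    · exact ⟨x0, comp_self hx0, caseA hS hmax hclq (comp_self hx0)⟩
    · obtain ⟨T0, x1, hT0, hx1, hsub0, hne0, hfull0⟩ :=
        descent hS (minSep_clique hG hS) hx0 hfull hclq
      -- the family of candidate pairs, parameterised by separator cardinality
      set P : ℕ → Prop := fun m => ∃ (R : Set V) (xF : V),
        IsMinSeparator G R ∧ xF ∉ R ∧ comp G R xF ⊆ C ∧ comp G R xF ≠ C ∧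
        (∀ r ∈ R, ∃ y ∈ comp G R xF, G.Adj r y) ∧ R.ncard = m with hPdef
      have hcardle : ∀ (X : Set V), X.ncard ≤ Fintype.card V := by
        intro X
        simpa [Set.ncard_univ] using Set.ncard_le_ncard (Set.subset_univ X) Set.finite_univ
      have hP0 : P T0.ncard := ⟨T0, x1, hT0, hx1, hsub0, hne0, hfull0, rfl⟩
      have hPspec : P (Nat.findGreatest P (Fintype.card V)) :=
        Nat.findGreatest_spec (hcardle T0) hP0
      obtain ⟨R, xF, hR, hxF, hFsub, hFne, hFfull, hRcard⟩ := hPspec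
      set F := comp G R xF with hFdef
      -- R is an inclusion-maximal minimal separator
      have hmaxR : ∀ R'', IsMinSeparator G R'' → R ⊆ R'' → R'' = R := by
        intro R'' hR'' hRsub
        by_contra hRne
        have hcardlt : R.ncard < R''.ncard :=
          Set.ncard_lt_ncard ⟨hRsub, fun h => hRne (subset_antisymm h hRsub)⟩
            (Set.toFinite R'')
        -- it suffices to produce a P-witness with cardinality R''.ncard
        have hcontra : ¬ P R''.ncard := by
          intro hP''
          have := Nat.le_findGreatest (hcardle R'') hP''
          omega
        apply hcontra
        -- boundary vertex r ∈ R ∩ C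
        obtain ⟨c, hcC, hcF⟩ : ∃ c, c ∈ C ∧ c ∉ F := by
          by_contra hno
          push_neg at hno
          exact hFne (subset_antisymm hFsub hno)
        have hrex : ∃ r ∈ R, RA G S xF r := by
          obtain ⟨p, hp⟩ : RA G S xF c :=
            ((comp_self hx0).trans (hFsub (comp_self hxF) : xF ∈ C)
              : RA G S x0 xF).symm.trans ((comp_self hx0).trans hcC).symm.symm
          exact exists_boundary (fun q y hq ha hy => comp_adj hq ha hy) p hp
            (comp_self hxF) hcF
        obtain ⟨r, hrR, hrRA⟩ := hrex
        have hrC : r ∈ C := ((comp_self hx0).trans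
          (hFsub (comp_self hxF) : xF ∈ C)).trans hrRA
        have hrR'' : r ∈ R'' := hRsub hrR
        have hR''clq : G.IsClique R'' := minSep_clique hG hR''
        have hR''sub : R'' ⊆ C ∪ S := by
          intro r'' hr''
          by_cases hrr : r'' = r
          · exact Or.inl (hrr ▸ hrC)
          · have hadj : G.Adj r r'' := hR''clq hrR'' hr'' (fun h => hrr h.symm)
            by_cases hrS : r'' ∈ S
            · exact Or.inr hrS
            · exact Or.inl (comp_adj hrC hadj hrS)
        obtain ⟨u'', w'', hmin''⟩ := hR''
        by_cases hint : ∃ z, z ∈ R'' ∧ z ∈ F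
        · -- case (i) : new separator meets F; its full components sit inside F
          obtain ⟨z, hzR'', hzF⟩ := hint
          obtain ⟨e, heE, hze⟩ := full_comp_of_minSep hmin'' z hzR''
          have heF : e ∈ F := by
            by_cases heR : e ∈ R
            · exact absurd (hRsub heR) (fun h => heE.notMem_right h)
            · exact comp_adj hzF hze heR
          have hE1F : comp G R'' u'' ⊆ F := by
            intro z1 hz1
            have h1 : RA G R e z1 := (heE.symm.trans hz1).anti hRsub
            show z1 ∈ comp G R xF
            exact comp_eq_of_mem heF ▸ (h1 : z1 ∈ comp G R e)
          refine ⟨R'', u'', ⟨u'', w'', hmin''⟩, hmin''.2.2.1,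
            hE1F.trans hFsub, ?_, full_comp_of_minSep hmin'', rfl⟩
          intro hEC
          apply hFne
          apply subset_antisymm hFsub
          intro cc hcc
          exact hE1F (by rw [hEC]; exact hcc)
        · -- case (ii) : new separator misses F
          push_neg at hint
          obtain ⟨z2, hz2S, hdisj2, hfull2⟩ := other_comp hS x0
          set C2 := comp G S z2 with hC2def
          have hC2R'' : ∀ {c2}, c2 ∈ C2 → c2 ∉ R'' := by
            intro c2 hc2 hc2R''
            rcases hR''sub hc2R'' with h | h
            · have : c2 ∈ C2 ∩ C := ⟨hc2, h⟩
              rw [hdisj2] at this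
              exact this
            · exact hc2.notMem_right h
          have hz2R'' : z2 ∉ R'' := hC2R'' (comp_self hz2S)
          -- C2 ⊆ Z := comp R'' z2
          have hC2Z : C2 ⊆ comp G R'' z2 := by
            intro c2 hc2
            obtain ⟨p, hp⟩ := hc2
            refine ⟨p, ?_⟩
            intro v hv
            exact hC2R'' (RA_of_mem_support p hp v hv)
          have hSZ : ∀ s ∈ S, s ∉ R'' → s ∈ comp G R'' z2 := by
            intro s hsS hsR''
            obtain ⟨y, hyC2, hsy⟩ := hfull2 s hsS
            exact (hC2Z hyC2).adj_extend hsy.symm hsR''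
          -- pick the full component of R'' different from Z
          have hEpick : ∃ uE, uE ∉ R'' ∧ (∀ r'' ∈ R'', ∃ y ∈ comp G R'' uE, G.Adj r'' y) ∧
              comp G R'' uE ≠ comp G R'' z2 := by
            by_cases hE1 : comp G R'' u'' = comp G R'' z2
            · refine ⟨w'', hmin''.2.2.2.1, full_comp_of_minSep (minSep_symm hmin''), ?_⟩
              intro hE2
              have := comp_ne_of_minSep hmin''
              rw [hE1, hE2] at this
              have hz2mem : z2 ∈ comp G R'' z2 := comp_self hz2R''
              have : z2 ∈ (∅ : Set V) := this ▸ (⟨hz2mem, hz2mem⟩ :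
                z2 ∈ comp G R'' z2 ∩ comp G R'' z2)
              exact this
            · exact ⟨u'', hmin''.2.2.1, full_comp_of_minSep hmin'', hE1⟩
          obtain ⟨uE, huE, hEfull, hEneZ⟩ := hEpick
          set E := comp G R'' uE with hEdef
          -- r has a neighbour e0 in E, and e0 ∈ C
          obtain ⟨e0, he0E, hre0⟩ := hEfull r hrR''
          have he0C : e0 ∈ C := by
            by_cases he0S : e0 ∈ S
            · exfalso
              have : e0 ∈ comp G R'' z2 := hSZ e0 he0S (fun h => he0E.notMem_right h)
              exact hEneZ (comp_eq_comp_of_mem he0E this)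
            · exact comp_adj hrC hre0 he0S
          -- E ⊆ C
          have hEC : E ⊆ C := by
            intro z1 hz1
            have hz1' : RA G R'' e0 z1 := he0E.symm.trans hz1
            refine RA.closed he0C ?_ hz1'
            intro q y hq hraq hadj hyR''
            by_cases hyS : y ∈ S
            · exfalso
              have hyE : y ∈ E := comp_adj (he0E.trans hraq) hadj hyR''
              have hyZ : y ∈ comp G R'' z2 := hSZ y hyS hyR''
              exact hEneZ (comp_eq_comp_of_mem hyE hyZ)
            · exact comp_adj hq hadj hyS
          refine ⟨R'', uE, ⟨u'', w'', hmin''⟩, huE, hEC, ?_, hEfull, rfl⟩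
          intro hECeq
          have hrE : r ∈ comp G R'' uE := by rw [hECeq]; exact hrC
          exact hrE.notMem_right hrR''
      -- now apply the inductive hypothesis to (R, F)
      have hFC : F ⊂ C := ⟨hFsub, fun h => hFne (subset_antisymm hFsub h)⟩
      have hFcard : F.ncard ≤ n := by
        have := Set.ncard_lt_ncard hFC (Set.toFinite C)
        omega
      obtain ⟨v, hvF, hvsimp, hvspec, hvQ⟩ := ih R xF hFcard hR hmaxR hxF hFfull
      refine ⟨v, hFsub hvF, hvsimp, hvspec, ?_⟩
      refine hvQ.trans ?_
      apply Set.union_subset (hFsub.trans Set.subset_union_left)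
      intro r1 hr1
      obtain ⟨y, hyF, hr1y⟩ := hFfull r1 hr1
      by_cases hr1S : r1 ∈ S
      · exact Or.inr hr1S
      · exact Or.inl (comp_adj (hFsub hyF) hr1y.symm hr1S)

end Chordal5

theorem stmt5 [Fintype V] (G : SimpleGraph V) (hG : Chordal G)
    (hnc : ∃ u w : V, u ≠ w ∧ ¬ G.Adj u w) :
    ∃ v w : V, v ≠ w ∧ ¬ G.Adj v w ∧ IsSimplicial G v ∧ IsSimplicial G w ∧
      IsSpecial G v ∧ IsSpecial G w := by
  classical
  open Chordal5 in
  obtain ⟨u, w, huw, hnadj⟩ := hnc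
  -- a minimal separator exists
  have hsepA : Separates G (Set.univ \ {u, w}) u w := by
    intro p
    cases p with
    | nil => exact absurd rfl huw
    | cons hadj q =>
      rename_i c
      refine ⟨c, by simp, Set.mem_univ c, ?_⟩
      simp only [Set.mem_insert_iff, Set.mem_singleton_iff]
      rintro (rfl | rfl)
      · exact G.irrefl hadj
      · exact hnadj hadj
  obtain ⟨T, hTA, hT⟩ := exists_minSep_subset (by simp) (by simp) huw hnadj hsepA
  obtain ⟨S, hS, hmax⟩ := exists_maximal_minSep ⟨T, u, w, hT⟩
  obtain ⟨u0, w0, hmin⟩ := hS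
  have hu0 : u0 ∉ S := hmin.2.2.1
  have hw0 : w0 ∉ S := hmin.2.2.2.1
  have hdisj : comp G S u0 ∩ comp G S w0 = ∅ := comp_ne_of_minSep hmin
  obtain ⟨v1, hv1C, hv1simp, hv1spec, hv1Q⟩ :=
    main_lemma hG (comp G S u0).ncard S u0 le_rfl ⟨u0, w0, hmin⟩ hmax hu0
      (full_comp_of_minSep hmin)
  obtain ⟨v2, hv2C, hv2simp, hv2spec, hv2Q⟩ :=
    main_lemma hG (comp G S w0).ncard S w0 le_rfl ⟨u0, w0, hmin⟩ hmax hw0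
      (full_comp_of_minSep (minSep_symm hmin))
  refine ⟨v1, v2, ?_, ?_, hv1simp, hv2simp, hv1spec, hv2spec⟩
  · rintro rfl
    have : v1 ∈ comp G S u0 ∩ comp G S w0 := ⟨hv1C, hv2C⟩
    rw [hdisj] at this
    exact this
  · intro hadj
    have hv2Qv1 : v2 ∈ Qv G v1 := Or.inr hadj
    rcases hv1Q hv2Qv1 with h | h
    · have : v2 ∈ comp G S u0 ∩ comp G S w0 := ⟨h, hv2C⟩
      rw [hdisj] at this
      exact this
    · exact hv2C.notMem_right h
end
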